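/- Let D1, D2, N be positive integers with D1 = t1 u1, D2 = t2 u2, gcd(t1 t2, u1 u2) = 1, N | t1 u1 and N | t2 u2. Then the GL(3) Kloosterman sum factors as S^{(N)}(n1, n2, m1, m2; t1 u1, t2 u2) = S^{(gcd(N,t1))}(ū1^2 u2 n1, ū2^2 u1 n2, m1, m2; t1, t2) · S^{(gcd(N,u1))}(t̄1^2 t2 n1, t̄2^2 t1 n2, m1, m2; u1, u2), where ū1 u1 ≡ 1 mod t1 t2 etc. -/

import Mathlib

open Finset

/-- `e(x) = exp(2πix)`. -/
noncomputable def eChar (x : ℝ) : ℂ := Complex.exp (2 * Real.pi * Complex.I * x)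

/-- Ramanujan sum `r_q(n) = Σ_{a mod q, (a,q)=1} e(an/q)`. -/
noncomputable def ramanujanSum (q : ℕ) (n : ℤ) : ℂ :=
  ∑ a ∈ Finset.range q, if Nat.gcd a q = 1 then eChar ((a : ℝ) * (n : ℝ) / q) else 0

/-- The GL(3) Kloosterman sum `S^{(N)}(n1,n2,m1,m2;D1,D2)`.  The summand is independent of
the choice of `(Y_j, Z_j)` with `Y_j B_j + Z_j C_j ≡ 1 mod D_j`; since there are exactly
`D_j` such pairs modulo `D_j`, we sum over all of them and divide by `D1 * D2`. -/
noncomputable def Kloosterman3 (N : ℕ) (n1 n2 m1 m2 : ℤ) (D1 D2 : ℕ) : ℂ :=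
  (1 / ((D1 : ℂ) * (D2 : ℂ))) *
  ∑ B1 ∈ range D1, ∑ C1 ∈ range D1, ∑ Y1 ∈ range D1, ∑ Z1 ∈ range D1,
  ∑ B2 ∈ range D2, ∑ C2 ∈ range D2, ∑ Y2 ∈ range D2, ∑ Z2 ∈ range D2,
    if ((D1 : ℤ) * C2 + (B1 : ℤ) * B2 + (D2 : ℤ) * C1) % ((D1 : ℤ) * D2) = 0 ∧
       Nat.gcd (Nat.gcd B1 C1) D1 = 1 ∧ Nat.gcd (Nat.gcd B2 C2) D2 = 1 ∧
       (N : ℤ) ∣ (B1 : ℤ) ∧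
       ((Y1 : ℤ) * B1 + (Z1 : ℤ) * C1) % (D1 : ℤ) = 1 % (D1 : ℤ) ∧
       ((Y2 : ℤ) * B2 + (Z2 : ℤ) * C2) % (D2 : ℤ) = 1 % (D2 : ℤ) then
      eChar (((n1 * B1 + m1 * ((Y1 : ℤ) * D2 - (Z1 : ℤ) * B2) : ℤ) : ℝ) / D1 +
             ((n2 * B2 + m2 * ((Y2 : ℤ) * D1 - (Z2 : ℤ) * B1) : ℤ) : ℝ) / D2)
    else 0

lemma eChar_add (x y : ℝ) : eChar (x + y) = eChar x * eChar y := by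
  unfold eChar; rw [← Complex.exp_add]; congr 1; push_cast; ring

lemma eChar_int (k : ℤ) : eChar (k : ℝ) = 1 := by
  unfold eChar; rw [← Complex.exp_int_mul_two_pi_mul_I k]; congr 1; push_cast; ring

lemma eChar_add_int (x : ℝ) (k : ℤ) : eChar (x + k) = eChar x := by
  rw [eChar_add, eChar_int, mul_one]

lemma gcd_eq_one_of_bezout {B C Y Z : ℤ} {D : ℕ}
    (h : (Y * B + Z * C) % (D:ℤ) = 1 % (D:ℤ)) : Nat.gcd (Int.gcd B C) D = 1 := by
  have h1 : Int.ModEq (D:ℤ) (Y * B + Z * C) 1 := h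
  have h2 : (D:ℤ) ∣ (Y * B + Z * C) - 1 := Int.ModEq.dvd h1.symm
  set g := Nat.gcd (Int.gcd B C) D with hg
  have hgB : (g:ℤ) ∣ B := dvd_trans (Int.natCast_dvd_natCast.mpr (Nat.gcd_dvd_left _ _)) (Int.gcd_dvd_left _ _)
  have hgC : (g:ℤ) ∣ C := dvd_trans (Int.natCast_dvd_natCast.mpr (Nat.gcd_dvd_left _ _)) (Int.gcd_dvd_right _ _)
  have hgD : (g:ℤ) ∣ (D:ℤ) := Int.natCast_dvd_natCast.mpr (Nat.gcd_dvd_right _ _)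
  have h3 : (g:ℤ) ∣ 1 := by
    have : (g:ℤ) ∣ (Y * B + Z * C) - 1 := dvd_trans hgD h2
    have h4 : (g:ℤ) ∣ Y * B + Z * C := dvd_add (Dvd.dvd.mul_left hgB Y) (Dvd.dvd.mul_left hgC Z)
    have := dvd_sub h4 this
    simpa using this
  exact Nat.dvd_one.mp (by exact_mod_cast h3)

lemma inv_fact (m : ℕ) (M : ℤ) (hmn : (m:ℤ) ∣ M) {x y : ℤ} (h : (x * y) % M = 1 % M) :
    (x : ZMod m) * (y : ZMod m) = 1 := by
  have h2 : Int.ModEq (m:ℤ) (x*y) 1 := Int.ModEq.of_dvd hmn h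
  have h3 := (ZMod.intCast_eq_intCast_iff _ _ m).mpr h2
  push_cast at h3; exact h3

lemma periodic_int (D : ℕ) (f : ℤ → ℂ) (hf : ∀ x, f (x + D) = f x) :
    ∀ (k x : ℤ), f (x + D * k) = f x := by
  intro k
  induction k using Int.induction_on with
  | zero => simp
  | succ k ih =>
      intro x
      rw [show x + (D:ℤ) * (k+1) = (x + D * k) + D by ring, hf, ih]
  | pred k ih =>
      intro x
      have h2 : (x + (D:ℤ) * (-k - 1)) + D = x + D * (-k) := by ring
      calc f (x + (D:ℤ) * (-↑k - 1)) = f ((x + (D:ℤ) * (-↑k - 1)) + D) := (hf _).symm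
        _ = f (x + D * (-(k:ℤ))) := by rw [h2]
        _ = f x := ih x

lemma f_val (D : ℕ) [NeZero D] (f : ℤ → ℂ) (hf : ∀ x, f (x + D) = f x) (x : ℤ) :
    f x = f ((x : ZMod D).val : ℤ) := by
  have h1 : ((x : ZMod D).val : ℤ) = x % D := by exact_mod_cast ZMod.val_intCast x
  have h2 := periodic_int D f hf (x / D) (x % D)
  rw [Int.emod_add_mul_ediv x D] at h2
  rw [h1, ← h2]

lemma sum_zmod {α : Type*} (D : ℕ) [NeZero D] (f : ℤ → ℂ) (hf : ∀ x, f (x + D) = f x)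
    (S : Finset α) (r : α → ℤ) (hcard : S.card = D)
    (hinj : ∀ a ∈ S, ∀ b ∈ S, ((r a : ZMod D)) = ((r b : ZMod D)) → a = b) :
    ∑ a ∈ S, f (r a) = ∑ z : ZMod D, f (z.val : ℤ) := by
  calc ∑ a ∈ S, f (r a)
      = ∑ a ∈ S, (fun z : ZMod D => f (z.val : ℤ)) ((r a : ZMod D)) :=
        Finset.sum_congr rfl (fun a _ => f_val D f hf (r a))
    _ = ∑ z ∈ S.image (fun a => ((r a : ZMod D))), (fun z : ZMod D => f (z.val : ℤ)) z :=
        (Finset.sum_image (f := fun z : ZMod D => f (z.val : ℤ)) hinj).symm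
    _ = ∑ z : ZMod D, f (z.val : ℤ) := by
        apply Finset.sum_congr _ (fun _ _ => rfl)
        apply Finset.eq_univ_of_card
        rw [Finset.card_image_of_injOn (fun a ha b hb h => hinj a ha b hb h), hcard, ZMod.card]

lemma sum_range_eq_zmod (D : ℕ) [NeZero D] (f : ℤ → ℂ) (hf : ∀ x, f (x + D) = f x) :
    ∑ i ∈ range D, f (i : ℤ) = ∑ z : ZMod D, f (z.val : ℤ) := by
  apply sum_zmod D f hf (range D) (fun i => (i : ℤ)) (card_range D)
  intro a ha b hb h
  simp only [mem_range] at ha hb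
  have : ((a : ZMod D)) = ((b : ZMod D)) := by exact_mod_cast h
  have := congrArg ZMod.val this
  rwa [ZMod.val_cast_of_lt ha, ZMod.val_cast_of_lt hb] at this

/-- Sum of a `D`-periodic function over a complete residue system equals sum over `range D`. -/
lemma sum_crs {α : Type*} (D : ℕ) (hD : D ≠ 0) (f : ℤ → ℂ) (hf : ∀ x, f (x + D) = f x)
    (S : Finset α) (r : α → ℤ) (hcard : S.card = D)
    (hinj : ∀ a ∈ S, ∀ b ∈ S, ((r a : ZMod D)) = ((r b : ZMod D)) → a = b) :
    ∑ a ∈ S, f (r a) = ∑ i ∈ range D, f (i : ℤ) := by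
  haveI : NeZero D := ⟨hD⟩
  rw [sum_zmod D f hf S r hcard hinj, sum_range_eq_zmod D f hf]

lemma sum_range_shift (D : ℕ) (hD : D ≠ 0) (f : ℤ → ℂ) (hf : ∀ x, f (x + D) = f x) (s : ℤ) :
    ∑ i ∈ range D, f ((i : ℤ) + s) = ∑ i ∈ range D, f (i : ℤ) := by
  apply sum_crs D hD f hf (range D) (fun i => (i : ℤ) + s) (card_range D)
  intro a ha b hb h
  simp only [mem_range] at ha hb
  have h2 : ((a : ZMod D)) = ((b : ZMod D)) := by
    have : ((a:ℤ) : ZMod D) + (s : ZMod D) = ((b:ℤ) : ZMod D) + (s : ZMod D) := by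
      push_cast at h ⊢; exact h
    have := add_right_cancel this
    exact_mod_cast this
  haveI : NeZero D := ⟨hD⟩
  have h3 := congrArg ZMod.val h2
  rwa [ZMod.val_cast_of_lt ha, ZMod.val_cast_of_lt hb] at h3
/-- Swap a sum in position 5 of an 8-fold nested sum to position 2. -/
lemma swap8 {M : Type*} [AddCommMonoid M] (D1 D2 : ℕ) (f : ℕ → ℕ → ℕ → ℕ → ℕ → ℕ → ℕ → ℕ → M) :
    (∑ B1 ∈ range D1, ∑ C1 ∈ range D1, ∑ Y1 ∈ range D1, ∑ Z1 ∈ range D1,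
     ∑ B2 ∈ range D2, ∑ C2 ∈ range D2, ∑ Y2 ∈ range D2, ∑ Z2 ∈ range D2,
       f B1 C1 Y1 Z1 B2 C2 Y2 Z2)
    = ∑ B1 ∈ range D1, ∑ B2 ∈ range D2, ∑ C1 ∈ range D1, ∑ Y1 ∈ range D1, ∑ Z1 ∈ range D1,
      ∑ C2 ∈ range D2, ∑ Y2 ∈ range D2, ∑ Z2 ∈ range D2, f B1 C1 Y1 Z1 B2 C2 Y2 Z2 := by
  refine Finset.sum_congr rfl fun B1 _ => ?_
  calc (∑ C1 ∈ range D1, ∑ Y1 ∈ range D1, ∑ Z1 ∈ range D1, ∑ B2 ∈ range D2,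
          ∑ C2 ∈ range D2, ∑ Y2 ∈ range D2, ∑ Z2 ∈ range D2, f B1 C1 Y1 Z1 B2 C2 Y2 Z2)
      = ∑ C1 ∈ range D1, ∑ Y1 ∈ range D1, ∑ B2 ∈ range D2, ∑ Z1 ∈ range D1,
          ∑ C2 ∈ range D2, ∑ Y2 ∈ range D2, ∑ Z2 ∈ range D2, f B1 C1 Y1 Z1 B2 C2 Y2 Z2 :=
        Finset.sum_congr rfl fun C1 _ => Finset.sum_congr rfl fun Y1 _ => Finset.sum_comm
    _ = ∑ C1 ∈ range D1, ∑ B2 ∈ range D2, ∑ Y1 ∈ range D1, ∑ Z1 ∈ range D1,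
          ∑ C2 ∈ range D2, ∑ Y2 ∈ range D2, ∑ Z2 ∈ range D2, f B1 C1 Y1 Z1 B2 C2 Y2 Z2 :=
        Finset.sum_congr rfl fun C1 _ => Finset.sum_comm
    _ = ∑ B2 ∈ range D2, ∑ C1 ∈ range D1, ∑ Y1 ∈ range D1, ∑ Z1 ∈ range D1,
          ∑ C2 ∈ range D2, ∑ Y2 ∈ range D2, ∑ Z2 ∈ range D2, f B1 C1 Y1 Z1 B2 C2 Y2 Z2 :=
        Finset.sum_comm

section Resum
variable (D1 D2 : ℕ)
variable (g : ℤ → ℤ → ℤ → ℤ → ℤ → ℤ → ℤ → ℤ → ℂ)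

lemma resum (hD1 : D1 ≠ 0) (hD2 : D2 ≠ 0)
    (hC1 : ∀ B1 C1 Y1 Z1 B2 C2 Y2 Z2, g B1 (C1 + D1) Y1 Z1 B2 C2 Y2 Z2 = g B1 C1 Y1 Z1 B2 C2 Y2 Z2)
    (hY1 : ∀ B1 C1 Y1 Z1 B2 C2 Y2 Z2, g B1 C1 (Y1 + D1) Z1 B2 C2 Y2 Z2 = g B1 C1 Y1 Z1 B2 C2 Y2 Z2)
    (hZ1 : ∀ B1 C1 Y1 Z1 B2 C2 Y2 Z2, g B1 C1 Y1 (Z1 + D1) B2 C2 Y2 Z2 = g B1 C1 Y1 Z1 B2 C2 Y2 Z2)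
    (hC2 : ∀ B1 C1 Y1 Z1 B2 C2 Y2 Z2, g B1 C1 Y1 Z1 B2 (C2 + D2) Y2 Z2 = g B1 C1 Y1 Z1 B2 C2 Y2 Z2)
    (hY2 : ∀ B1 C1 Y1 Z1 B2 C2 Y2 Z2, g B1 C1 Y1 Z1 B2 C2 (Y2 + D2) Z2 = g B1 C1 Y1 Z1 B2 C2 Y2 Z2)
    (hZ2 : ∀ B1 C1 Y1 Z1 B2 C2 Y2 Z2, g B1 C1 Y1 Z1 B2 C2 Y2 (Z2 + D2) = g B1 C1 Y1 Z1 B2 C2 Y2 Z2)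
    (hB1 : ∀ B1 C1 Y1 Z1 B2 C2 Y2 Z2, g (B1 + D1) C1 Y1 Z1 B2 C2 Y2 Z2
            = g B1 C1 Y1 Z1 B2 (C2 + B2) (Y2 - Z2) Z2)
    (hB2 : ∀ B1 C1 Y1 Z1 B2 C2 Y2 Z2, g B1 C1 Y1 Z1 (B2 + D2) C2 Y2 Z2
            = g B1 (C1 + B1) (Y1 - Z1) Z1 B2 C2 Y2 Z2)
    {α1 α2 α3 α4 α5 α6 α7 α8 : Type}
    (S1 : Finset α1) (r1 : α1 → ℤ) (h1c : S1.card = D1)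
    (h1i : ∀ a ∈ S1, ∀ b ∈ S1, ((r1 a : ZMod D1)) = ((r1 b : ZMod D1)) → a = b)
    (S2 : Finset α2) (r2 : α2 → ℤ) (h2c : S2.card = D2)
    (h2i : ∀ a ∈ S2, ∀ b ∈ S2, ((r2 a : ZMod D2)) = ((r2 b : ZMod D2)) → a = b)
    (S3 : Finset α3) (r3 : α3 → ℤ) (h3c : S3.card = D1)
    (h3i : ∀ a ∈ S3, ∀ b ∈ S3, ((r3 a : ZMod D1)) = ((r3 b : ZMod D1)) → a = b)
    (S4 : Finset α4) (r4 : α4 → ℤ) (h4c : S4.card = D1)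
    (h4i : ∀ a ∈ S4, ∀ b ∈ S4, ((r4 a : ZMod D1)) = ((r4 b : ZMod D1)) → a = b)
    (S5 : Finset α5) (r5 : α5 → ℤ) (h5c : S5.card = D1)
    (h5i : ∀ a ∈ S5, ∀ b ∈ S5, ((r5 a : ZMod D1)) = ((r5 b : ZMod D1)) → a = b)
    (S6 : Finset α6) (r6 : α6 → ℤ) (h6c : S6.card = D2)
    (h6i : ∀ a ∈ S6, ∀ b ∈ S6, ((r6 a : ZMod D2)) = ((r6 b : ZMod D2)) → a = b)
    (S7 : Finset α7) (r7 : α7 → ℤ) (h7c : S7.card = D2)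
    (h7i : ∀ a ∈ S7, ∀ b ∈ S7, ((r7 a : ZMod D2)) = ((r7 b : ZMod D2)) → a = b)
    (S8 : Finset α8) (r8 : α8 → ℤ) (h8c : S8.card = D2)
    (h8i : ∀ a ∈ S8, ∀ b ∈ S8, ((r8 a : ZMod D2)) = ((r8 b : ZMod D2)) → a = b) :
    (∑ B1 ∈ range D1, ∑ C1 ∈ range D1, ∑ Y1 ∈ range D1, ∑ Z1 ∈ range D1,
     ∑ B2 ∈ range D2, ∑ C2 ∈ range D2, ∑ Y2 ∈ range D2, ∑ Z2 ∈ range D2,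
       g B1 C1 Y1 Z1 B2 C2 Y2 Z2)
    = ∑ a1 ∈ S1, ∑ a2 ∈ S2, ∑ a3 ∈ S3, ∑ a4 ∈ S4, ∑ a5 ∈ S5, ∑ a6 ∈ S6, ∑ a7 ∈ S7, ∑ a8 ∈ S8,
      g (r1 a1) (r3 a3) (r4 a4) (r5 a5) (r2 a2) (r6 a6) (r7 a7) (r8 a8) := by
  -- the six "inner" sums, as a function of the two outer variables
  set Φ : ℤ → ℤ → ℂ := fun x y => ∑ C1 ∈ range D1, ∑ Y1 ∈ range D1, ∑ Z1 ∈ range D1,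
      ∑ C2 ∈ range D2, ∑ Y2 ∈ range D2, ∑ Z2 ∈ range D2,
        g x C1 Y1 Z1 y C2 Y2 Z2 with hΦdef
  -- periodicity of Φ in the first variable
  have hΦ1 : ∀ x y : ℤ, Φ (x + D1) y = Φ x y := by
    intro x y
    calc Φ (x + D1) y
        = ∑ C1 ∈ range D1, ∑ Y1 ∈ range D1, ∑ Z1 ∈ range D1,
          ∑ C2 ∈ range D2, ∑ Y2 ∈ range D2, ∑ Z2 ∈ range D2,
            g x C1 Y1 Z1 y ((C2:ℤ) + y) ((Y2:ℤ) - Z2) Z2 := by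
          refine Finset.sum_congr rfl fun C1 _ => Finset.sum_congr rfl fun Y1 _ =>
            Finset.sum_congr rfl fun Z1 _ => Finset.sum_congr rfl fun C2 _ =>
            Finset.sum_congr rfl fun Y2 _ => Finset.sum_congr rfl fun Z2 _ => hB1 ..
      _ = ∑ C1 ∈ range D1, ∑ Y1 ∈ range D1, ∑ Z1 ∈ range D1,
          ∑ C2 ∈ range D2, ∑ Y2 ∈ range D2, ∑ Z2 ∈ range D2,
            g x C1 Y1 Z1 y C2 ((Y2:ℤ) - Z2) Z2 := by
          refine Finset.sum_congr rfl fun C1 _ => Finset.sum_congr rfl fun Y1 _ =>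
            Finset.sum_congr rfl fun Z1 _ => ?_
          exact sum_range_shift D2 hD2
            (fun c => ∑ Y2 ∈ range D2, ∑ Z2 ∈ range D2, g x C1 Y1 Z1 y c ((Y2:ℤ) - Z2) Z2)
            (fun c => Finset.sum_congr rfl fun Y2 _ => Finset.sum_congr rfl fun Z2 _ => hC2 ..) y
      _ = ∑ C1 ∈ range D1, ∑ Y1 ∈ range D1, ∑ Z1 ∈ range D1,
          ∑ C2 ∈ range D2, ∑ Y2 ∈ range D2, ∑ Z2 ∈ range D2,
            g x C1 Y1 Z1 y C2 Y2 Z2 := by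
          refine Finset.sum_congr rfl fun C1 _ => Finset.sum_congr rfl fun Y1 _ =>
            Finset.sum_congr rfl fun Z1 _ => Finset.sum_congr rfl fun C2 _ => ?_
          calc (∑ Y2 ∈ range D2, ∑ Z2 ∈ range D2, g x C1 Y1 Z1 y C2 ((Y2:ℤ) - Z2) Z2)
              = ∑ Z2 ∈ range D2, ∑ Y2 ∈ range D2, g x C1 Y1 Z1 y C2 ((Y2:ℤ) - Z2) Z2 :=
                Finset.sum_comm
            _ = ∑ Z2 ∈ range D2, ∑ Y2 ∈ range D2, g x C1 Y1 Z1 y C2 Y2 Z2 := by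
                refine Finset.sum_congr rfl fun Z2 _ => ?_
                have := sum_range_shift D2 hD2 (fun w => g x C1 Y1 Z1 y C2 w Z2)
                  (fun w => hY2 ..) (-(Z2:ℤ))
                simpa [sub_eq_add_neg] using this
            _ = ∑ Y2 ∈ range D2, ∑ Z2 ∈ range D2, g x C1 Y1 Z1 y C2 Y2 Z2 :=
                Finset.sum_comm
  -- periodicity of Φ in the second variable
  have hΦ2 : ∀ x y : ℤ, Φ x (y + D2) = Φ x y := by
    intro x y
    calc Φ x (y + D2)
        = ∑ C1 ∈ range D1, ∑ Y1 ∈ range D1, ∑ Z1 ∈ range D1,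
          ∑ C2 ∈ range D2, ∑ Y2 ∈ range D2, ∑ Z2 ∈ range D2,
            g x ((C1:ℤ) + x) ((Y1:ℤ) - Z1) Z1 y C2 Y2 Z2 := by
          refine Finset.sum_congr rfl fun C1 _ => Finset.sum_congr rfl fun Y1 _ =>
            Finset.sum_congr rfl fun Z1 _ => Finset.sum_congr rfl fun C2 _ =>
            Finset.sum_congr rfl fun Y2 _ => Finset.sum_congr rfl fun Z2 _ => hB2 ..
      _ = ∑ C1 ∈ range D1, ∑ Y1 ∈ range D1, ∑ Z1 ∈ range D1,
          ∑ C2 ∈ range D2, ∑ Y2 ∈ range D2, ∑ Z2 ∈ range D2,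
            g x C1 ((Y1:ℤ) - Z1) Z1 y C2 Y2 Z2 := by
          exact sum_range_shift D1 hD1
            (fun c => ∑ Y1 ∈ range D1, ∑ Z1 ∈ range D1, ∑ C2 ∈ range D2, ∑ Y2 ∈ range D2,
              ∑ Z2 ∈ range D2, g x c ((Y1:ℤ) - Z1) Z1 y C2 Y2 Z2)
            (fun c => Finset.sum_congr rfl fun Y1 _ => Finset.sum_congr rfl fun Z1 _ =>
              Finset.sum_congr rfl fun C2 _ => Finset.sum_congr rfl fun Y2 _ =>
              Finset.sum_congr rfl fun Z2 _ => hC1 ..) x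
      _ = ∑ C1 ∈ range D1, ∑ Y1 ∈ range D1, ∑ Z1 ∈ range D1,
          ∑ C2 ∈ range D2, ∑ Y2 ∈ range D2, ∑ Z2 ∈ range D2,
            g x C1 Y1 Z1 y C2 Y2 Z2 := by
          refine Finset.sum_congr rfl fun C1 _ => ?_
          calc (∑ Y1 ∈ range D1, ∑ Z1 ∈ range D1, ∑ C2 ∈ range D2, ∑ Y2 ∈ range D2,
                  ∑ Z2 ∈ range D2, g x C1 ((Y1:ℤ) - Z1) Z1 y C2 Y2 Z2)
              = ∑ Z1 ∈ range D1, ∑ Y1 ∈ range D1, ∑ C2 ∈ range D2, ∑ Y2 ∈ range D2,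
                  ∑ Z2 ∈ range D2, g x C1 ((Y1:ℤ) - Z1) Z1 y C2 Y2 Z2 := Finset.sum_comm
            _ = ∑ Z1 ∈ range D1, ∑ Y1 ∈ range D1, ∑ C2 ∈ range D2, ∑ Y2 ∈ range D2,
                  ∑ Z2 ∈ range D2, g x C1 Y1 Z1 y C2 Y2 Z2 := by
                refine Finset.sum_congr rfl fun Z1 _ => ?_
                have := sum_range_shift D1 hD1
                  (fun w => ∑ C2 ∈ range D2, ∑ Y2 ∈ range D2, ∑ Z2 ∈ range D2,
                    g x C1 w Z1 y C2 Y2 Z2)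
                  (fun w => Finset.sum_congr rfl fun C2 _ => Finset.sum_congr rfl fun Y2 _ =>
                    Finset.sum_congr rfl fun Z2 _ => hY1 ..) (-(Z1:ℤ))
                simpa [sub_eq_add_neg] using this
            _ = ∑ Y1 ∈ range D1, ∑ Z1 ∈ range D1, ∑ C2 ∈ range D2, ∑ Y2 ∈ range D2,
                  ∑ Z2 ∈ range D2, g x C1 Y1 Z1 y C2 Y2 Z2 := Finset.sum_comm
  calc (∑ B1 ∈ range D1, ∑ C1 ∈ range D1, ∑ Y1 ∈ range D1, ∑ Z1 ∈ range D1,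
        ∑ B2 ∈ range D2, ∑ C2 ∈ range D2, ∑ Y2 ∈ range D2, ∑ Z2 ∈ range D2,
          g B1 C1 Y1 Z1 B2 C2 Y2 Z2)
      = ∑ B1 ∈ range D1, ∑ B2 ∈ range D2, Φ B1 B2 := by
        exact swap8 D1 D2 (fun B1 C1 Y1 Z1 B2 C2 Y2 Z2 => g B1 C1 Y1 Z1 B2 C2 Y2 Z2)
    _ = ∑ a1 ∈ S1, ∑ B2 ∈ range D2, Φ (r1 a1) B2 := by
        exact (sum_crs D1 hD1 (fun x => ∑ B2 ∈ range D2, Φ x B2)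
          (fun x => Finset.sum_congr rfl fun B2 _ => hΦ1 x B2) S1 r1 h1c h1i).symm
    _ = ∑ a1 ∈ S1, ∑ a2 ∈ S2, Φ (r1 a1) (r2 a2) := by
        refine Finset.sum_congr rfl fun a1 _ => ?_
        exact (sum_crs D2 hD2 (fun y => Φ (r1 a1) y) (fun y => hΦ2 (r1 a1) y) S2 r2 h2c h2i).symm
    _ = ∑ a1 ∈ S1, ∑ a2 ∈ S2, ∑ a3 ∈ S3, ∑ a4 ∈ S4, ∑ a5 ∈ S5, ∑ a6 ∈ S6, ∑ a7 ∈ S7, ∑ a8 ∈ S8,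
        g (r1 a1) (r3 a3) (r4 a4) (r5 a5) (r2 a2) (r6 a6) (r7 a7) (r8 a8) := by
        refine Finset.sum_congr rfl fun a1 _ => Finset.sum_congr rfl fun a2 _ => ?_
        calc Φ (r1 a1) (r2 a2)
            = ∑ a3 ∈ S3, ∑ Y1 ∈ range D1, ∑ Z1 ∈ range D1, ∑ C2 ∈ range D2, ∑ Y2 ∈ range D2,
                ∑ Z2 ∈ range D2, g (r1 a1) (r3 a3) Y1 Z1 (r2 a2) C2 Y2 Z2 := by
              exact (sum_crs D1 hD1
                (fun c => ∑ Y1 ∈ range D1, ∑ Z1 ∈ range D1, ∑ C2 ∈ range D2, ∑ Y2 ∈ range D2,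
                  ∑ Z2 ∈ range D2, g (r1 a1) c Y1 Z1 (r2 a2) C2 Y2 Z2)
                (fun c => Finset.sum_congr rfl fun Y1 _ => Finset.sum_congr rfl fun Z1 _ =>
                  Finset.sum_congr rfl fun C2 _ => Finset.sum_congr rfl fun Y2 _ =>
                  Finset.sum_congr rfl fun Z2 _ => hC1 ..) S3 r3 h3c h3i).symm
          _ = ∑ a3 ∈ S3, ∑ a4 ∈ S4, ∑ Z1 ∈ range D1, ∑ C2 ∈ range D2, ∑ Y2 ∈ range D2,
                ∑ Z2 ∈ range D2, g (r1 a1) (r3 a3) (r4 a4) Z1 (r2 a2) C2 Y2 Z2 := by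
              refine Finset.sum_congr rfl fun a3 _ => ?_
              exact (sum_crs D1 hD1
                (fun w => ∑ Z1 ∈ range D1, ∑ C2 ∈ range D2, ∑ Y2 ∈ range D2,
                  ∑ Z2 ∈ range D2, g (r1 a1) (r3 a3) w Z1 (r2 a2) C2 Y2 Z2)
                (fun w => Finset.sum_congr rfl fun Z1 _ => Finset.sum_congr rfl fun C2 _ =>
                  Finset.sum_congr rfl fun Y2 _ => Finset.sum_congr rfl fun Z2 _ => hY1 ..)
                S4 r4 h4c h4i).symm
          _ = ∑ a3 ∈ S3, ∑ a4 ∈ S4, ∑ a5 ∈ S5, ∑ C2 ∈ range D2, ∑ Y2 ∈ range D2,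
                ∑ Z2 ∈ range D2, g (r1 a1) (r3 a3) (r4 a4) (r5 a5) (r2 a2) C2 Y2 Z2 := by
              refine Finset.sum_congr rfl fun a3 _ => Finset.sum_congr rfl fun a4 _ => ?_
              exact (sum_crs D1 hD1
                (fun w => ∑ C2 ∈ range D2, ∑ Y2 ∈ range D2, ∑ Z2 ∈ range D2,
                  g (r1 a1) (r3 a3) (r4 a4) w (r2 a2) C2 Y2 Z2)
                (fun w => Finset.sum_congr rfl fun C2 _ => Finset.sum_congr rfl fun Y2 _ =>
                  Finset.sum_congr rfl fun Z2 _ => hZ1 ..) S5 r5 h5c h5i).symm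
          _ = ∑ a3 ∈ S3, ∑ a4 ∈ S4, ∑ a5 ∈ S5, ∑ a6 ∈ S6, ∑ Y2 ∈ range D2,
                ∑ Z2 ∈ range D2, g (r1 a1) (r3 a3) (r4 a4) (r5 a5) (r2 a2) (r6 a6) Y2 Z2 := by
              refine Finset.sum_congr rfl fun a3 _ => Finset.sum_congr rfl fun a4 _ =>
                Finset.sum_congr rfl fun a5 _ => ?_
              exact (sum_crs D2 hD2
                (fun w => ∑ Y2 ∈ range D2, ∑ Z2 ∈ range D2,
                  g (r1 a1) (r3 a3) (r4 a4) (r5 a5) (r2 a2) w Y2 Z2)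
                (fun w => Finset.sum_congr rfl fun Y2 _ => Finset.sum_congr rfl fun Z2 _ =>
                  hC2 ..) S6 r6 h6c h6i).symm
          _ = ∑ a3 ∈ S3, ∑ a4 ∈ S4, ∑ a5 ∈ S5, ∑ a6 ∈ S6, ∑ a7 ∈ S7,
                ∑ Z2 ∈ range D2, g (r1 a1) (r3 a3) (r4 a4) (r5 a5) (r2 a2) (r6 a6) (r7 a7) Z2 := by
              refine Finset.sum_congr rfl fun a3 _ => Finset.sum_congr rfl fun a4 _ =>
                Finset.sum_congr rfl fun a5 _ => Finset.sum_congr rfl fun a6 _ => ?_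
              exact (sum_crs D2 hD2
                (fun w => ∑ Z2 ∈ range D2,
                  g (r1 a1) (r3 a3) (r4 a4) (r5 a5) (r2 a2) (r6 a6) w Z2)
                (fun w => Finset.sum_congr rfl fun Z2 _ => hY2 ..) S7 r7 h7c h7i).symm
          _ = ∑ a3 ∈ S3, ∑ a4 ∈ S4, ∑ a5 ∈ S5, ∑ a6 ∈ S6, ∑ a7 ∈ S7, ∑ a8 ∈ S8,
                g (r1 a1) (r3 a3) (r4 a4) (r5 a5) (r2 a2) (r6 a6) (r7 a7) (r8 a8) := by
              refine Finset.sum_congr rfl fun a3 _ => Finset.sum_congr rfl fun a4 _ =>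
                Finset.sum_congr rfl fun a5 _ => Finset.sum_congr rfl fun a6 _ =>
                Finset.sum_congr rfl fun a7 _ => ?_
              exact (sum_crs D2 hD2
                (fun w => g (r1 a1) (r3 a3) (r4 a4) (r5 a5) (r2 a2) (r6 a6) (r7 a7) w)
                (fun w => hZ2 ..) S8 r8 h8c h8i).symm
end Resum

lemma zmod_down {m n : ℕ} (h : m ∣ n) {x y : ℤ} (hxy : (x : ZMod n) = (y : ZMod n)) :
    (x : ZMod m) = (y : ZMod m) := by
  have := congrArg (ZMod.castHom h (ZMod m)) hxy
  simpa using this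

lemma zmod_of_modeq {m : ℕ} {M x y : ℤ} (hd : (m:ℤ) ∣ M) (h : x % M = y % M) :
    (x : ZMod m) = (y : ZMod m) :=
  (ZMod.intCast_eq_intCast_iff _ _ _).mpr (Int.ModEq.of_dvd hd h)

/-- CRT-type injectivity for maps `(a, b) ↦ P a + Q b`. -/
lemma crt_inj (t u : ℕ) (P Q Pi Qi : ℤ)
    (hPt : ((Pi * P : ℤ) : ZMod t) = 1) (hQt : ((Q : ℤ) : ZMod t) = 0)
    (hQu : ((Qi * Q : ℤ) : ZMod u) = 1) (hPu : ((P : ℤ) : ZMod u) = 0) :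
    ∀ a ∈ range t ×ˢ range u, ∀ b ∈ range t ×ˢ range u,
      (((P * a.1 + Q * a.2 : ℤ)) : ZMod (t * u)) = ((P * b.1 + Q * b.2 : ℤ) : ZMod (t * u)) →
      a = b := by
  intro a ha b hb h
  simp only [mem_product, mem_range] at ha hb
  have ht : (((P * a.1 + Q * a.2 : ℤ)) : ZMod t) = ((P * b.1 + Q * b.2 : ℤ) : ZMod t) :=
    zmod_down (Dvd.intro u rfl) h
  have hu : (((P * a.1 + Q * a.2 : ℤ)) : ZMod u) = ((P * b.1 + Q * b.2 : ℤ) : ZMod u) :=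
    zmod_down (Dvd.intro_left t rfl) h
  push_cast at ht hu hPt hQt hQu hPu
  have e1 : ((a.1 : ZMod t)) = (b.1 : ZMod t) := by
    calc (a.1 : ZMod t) = (Pi * P) * a.1 := by rw [hPt, one_mul]
      _ = Pi * (P * a.1 + Q * a.2) - (Q * a.2) * Pi := by ring
      _ = Pi * (P * b.1 + Q * b.2) - (Q * b.2) * Pi := by rw [ht, hQt]; ring
      _ = (Pi * P) * b.1 := by rw [hQt]; ring
      _ = b.1 := by rw [hPt, one_mul]
  have e2 : ((a.2 : ZMod u)) = (b.2 : ZMod u) := by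
    calc (a.2 : ZMod u) = (Qi * Q) * a.2 := by rw [hQu, one_mul]
      _ = Qi * (P * a.1 + Q * a.2) - (P * a.1) * Qi := by ring
      _ = Qi * (P * b.1 + Q * b.2) - (P * b.1) * Qi := by rw [hu, hPu]; ring
      _ = (Qi * Q) * b.2 := by rw [hPu]; ring
      _ = b.2 := by rw [hQu, one_mul]
  have ht0 : t ≠ 0 := by rintro rfl; exact absurd ha.1 (by simp)
  have hu0 : u ≠ 0 := by rintro rfl; exact absurd ha.2 (by simp)
  haveI : NeZero t := ⟨ht0⟩
  haveI : NeZero u := ⟨hu0⟩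
  have f1 := congrArg ZMod.val e1
  have f2 := congrArg ZMod.val e2
  rw [ZMod.val_cast_of_lt ha.1, ZMod.val_cast_of_lt hb.1] at f1
  rw [ZMod.val_cast_of_lt ha.2, ZMod.val_cast_of_lt hb.2] at f2
  exact Prod.ext f1 f2

/-- Internal summand over `ℤ` with redundant gcd-conditions removed. -/
noncomputable def gK (N : ℕ) (n1 n2 m1 m2 : ℤ) (D1 D2 : ℕ) (B1 C1 Y1 Z1 B2 C2 Y2 Z2 : ℤ) : ℂ :=
  if ((D1 : ℤ) * C2 + B1 * B2 + (D2 : ℤ) * C1) % ((D1 : ℤ) * D2) = 0 ∧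
     (N : ℤ) ∣ B1 ∧
     (Y1 * B1 + Z1 * C1) % (D1 : ℤ) = 1 % (D1 : ℤ) ∧
     (Y2 * B2 + Z2 * C2) % (D2 : ℤ) = 1 % (D2 : ℤ) then
    eChar (((n1 * B1 + m1 * (Y1 * D2 - Z1 * B2) : ℤ) : ℝ) / D1 +
           ((n2 * B2 + m2 * (Y2 * D1 - Z2 * B1) : ℤ) : ℝ) / D2)
  else 0

lemma K3_eq (N : ℕ) (n1 n2 m1 m2 : ℤ) (D1 D2 : ℕ) :
    Kloosterman3 N n1 n2 m1 m2 D1 D2 = (1 / ((D1 : ℂ) * (D2 : ℂ))) *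
    ∑ B1 ∈ range D1, ∑ C1 ∈ range D1, ∑ Y1 ∈ range D1, ∑ Z1 ∈ range D1,
    ∑ B2 ∈ range D2, ∑ C2 ∈ range D2, ∑ Y2 ∈ range D2, ∑ Z2 ∈ range D2,
      gK N n1 n2 m1 m2 D1 D2 B1 C1 Y1 Z1 B2 C2 Y2 Z2 := by
  unfold Kloosterman3 gK
  refine congrArg _ ?_
  refine Finset.sum_congr rfl fun B1 _ => Finset.sum_congr rfl fun C1 _ =>
    Finset.sum_congr rfl fun Y1 _ => Finset.sum_congr rfl fun Z1 _ =>
    Finset.sum_congr rfl fun B2 _ => Finset.sum_congr rfl fun C2 _ =>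
    Finset.sum_congr rfl fun Y2 _ => Finset.sum_congr rfl fun Z2 _ => ?_
  refine if_congr ?_ rfl rfl
  constructor
  · rintro ⟨h1, _, _, h4, h5, h6⟩; exact ⟨h1, h4, h5, h6⟩
  · rintro ⟨h1, h4, h5, h6⟩
    refine ⟨h1, ?_, ?_, h4, h5, h6⟩
    · have := gcd_eq_one_of_bezout h5; simpa using this
    · have := gcd_eq_one_of_bezout h6; simpa using this

section
variable (N : ℕ) (n1 n2 m1 m2 : ℤ) (D1 D2 : ℕ) (B1 C1 Y1 Z1 B2 C2 Y2 Z2 : ℤ)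

lemma gK_C1 : gK N n1 n2 m1 m2 D1 D2 B1 (C1 + D1) Y1 Z1 B2 C2 Y2 Z2
    = gK N n1 n2 m1 m2 D1 D2 B1 C1 Y1 Z1 B2 C2 Y2 Z2 := by
  unfold gK
  rw [show (D1:ℤ) * C2 + B1 * B2 + D2 * (C1 + D1) = ((D1:ℤ) * C2 + B1 * B2 + D2 * C1) + (D1:ℤ)*D2 * 1 by ring,
     Int.add_mul_emod_self_left,
     show Y1 * B1 + Z1 * (C1 + D1) = (Y1 * B1 + Z1 * C1) + (D1:ℤ) * Z1 by ring,
     Int.add_mul_emod_self_left]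

lemma gK_Z1 (hD1 : 0 < D1) : gK N n1 n2 m1 m2 D1 D2 B1 C1 Y1 (Z1 + D1) B2 C2 Y2 Z2
    = gK N n1 n2 m1 m2 D1 D2 B1 C1 Y1 Z1 B2 C2 Y2 Z2 := by
  unfold gK
  rw [show Y1 * B1 + (Z1 + D1) * C1 = (Y1 * B1 + Z1 * C1) + (D1:ℤ) * C1 by ring,
     Int.add_mul_emod_self_left]
  refine if_congr Iff.rfl ?_ rfl
  rw [show ((n1 * B1 + m1 * (Y1 * (D2:ℤ) - (Z1 + D1) * B2) : ℤ) : ℝ) / D1 +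
        ((n2 * B2 + m2 * (Y2 * D1 - Z2 * B1) : ℤ) : ℝ) / D2
      = (((n1 * B1 + m1 * (Y1 * D2 - Z1 * B2) : ℤ) : ℝ) / D1 +
        ((n2 * B2 + m2 * (Y2 * D1 - Z2 * B1) : ℤ) : ℝ) / D2) + ((-(m1 * B2) : ℤ) : ℝ) from by
    have h1 : (D1:ℝ) ≠ 0 := Nat.cast_ne_zero.mpr hD1.ne'
    push_cast
    field_simp
    ring, eChar_add_int]

lemma gK_Y1 (hD1 : 0 < D1) : gK N n1 n2 m1 m2 D1 D2 B1 C1 (Y1 + D1) Z1 B2 C2 Y2 Z2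
    = gK N n1 n2 m1 m2 D1 D2 B1 C1 Y1 Z1 B2 C2 Y2 Z2 := by
  unfold gK
  rw [show (Y1 + D1) * B1 + Z1 * C1 = (Y1 * B1 + Z1 * C1) + (D1:ℤ) * B1 by ring,
     Int.add_mul_emod_self_left]
  refine if_congr Iff.rfl ?_ rfl
  rw [show ((n1 * B1 + m1 * ((Y1 + D1) * (D2:ℤ) - Z1 * B2) : ℤ) : ℝ) / D1 +
        ((n2 * B2 + m2 * (Y2 * D1 - Z2 * B1) : ℤ) : ℝ) / D2
      = (((n1 * B1 + m1 * (Y1 * D2 - Z1 * B2) : ℤ) : ℝ) / D1 +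
        ((n2 * B2 + m2 * (Y2 * D1 - Z2 * B1) : ℤ) : ℝ) / D2) + ((m1 * D2 : ℤ) : ℝ) from by
    have h1 : (D1:ℝ) ≠ 0 := Nat.cast_ne_zero.mpr hD1.ne'
    push_cast
    field_simp
    ring, eChar_add_int]

lemma gK_C2 : gK N n1 n2 m1 m2 D1 D2 B1 C1 Y1 Z1 B2 (C2 + D2) Y2 Z2
    = gK N n1 n2 m1 m2 D1 D2 B1 C1 Y1 Z1 B2 C2 Y2 Z2 := by
  unfold gK
  rw [show (D1:ℤ) * (C2 + D2) + B1 * B2 + D2 * C1 = ((D1:ℤ) * C2 + B1 * B2 + D2 * C1) + (D1:ℤ)*D2 * 1 by ring,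
     Int.add_mul_emod_self_left,
     show Y2 * B2 + Z2 * (C2 + D2) = (Y2 * B2 + Z2 * C2) + (D2:ℤ) * Z2 by ring,
     Int.add_mul_emod_self_left]

lemma gK_Z2 (hD2 : 0 < D2) : gK N n1 n2 m1 m2 D1 D2 B1 C1 Y1 Z1 B2 C2 Y2 (Z2 + D2)
    = gK N n1 n2 m1 m2 D1 D2 B1 C1 Y1 Z1 B2 C2 Y2 Z2 := by
  unfold gK
  rw [show Y2 * B2 + (Z2 + D2) * C2 = (Y2 * B2 + Z2 * C2) + (D2:ℤ) * C2 by ring,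
     Int.add_mul_emod_self_left]
  refine if_congr Iff.rfl ?_ rfl
  rw [show ((n1 * B1 + m1 * (Y1 * (D2:ℤ) - Z1 * B2) : ℤ) : ℝ) / D1 +
        ((n2 * B2 + m2 * (Y2 * (D1:ℤ) - (Z2 + D2) * B1) : ℤ) : ℝ) / D2
      = (((n1 * B1 + m1 * (Y1 * D2 - Z1 * B2) : ℤ) : ℝ) / D1 +
        ((n2 * B2 + m2 * (Y2 * D1 - Z2 * B1) : ℤ) : ℝ) / D2) + ((-(m2 * B1) : ℤ) : ℝ) from by
    have h2 : (D2:ℝ) ≠ 0 := Nat.cast_ne_zero.mpr hD2.ne'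
    push_cast
    field_simp
    ring, eChar_add_int]

lemma gK_Y2 (hD2 : 0 < D2) : gK N n1 n2 m1 m2 D1 D2 B1 C1 Y1 Z1 B2 C2 (Y2 + D2) Z2
    = gK N n1 n2 m1 m2 D1 D2 B1 C1 Y1 Z1 B2 C2 Y2 Z2 := by
  unfold gK
  rw [show (Y2 + D2) * B2 + Z2 * C2 = (Y2 * B2 + Z2 * C2) + (D2:ℤ) * B2 by ring,
     Int.add_mul_emod_self_left]
  refine if_congr Iff.rfl ?_ rfl
  rw [show ((n1 * B1 + m1 * (Y1 * (D2:ℤ) - Z1 * B2) : ℤ) : ℝ) / D1 +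
        ((n2 * B2 + m2 * ((Y2 + D2) * (D1:ℤ) - Z2 * B1) : ℤ) : ℝ) / D2
      = (((n1 * B1 + m1 * (Y1 * D2 - Z1 * B2) : ℤ) : ℝ) / D1 +
        ((n2 * B2 + m2 * (Y2 * D1 - Z2 * B1) : ℤ) : ℝ) / D2) + ((m2 * D1 : ℤ) : ℝ) from by
    have h2 : (D2:ℝ) ≠ 0 := Nat.cast_ne_zero.mpr hD2.ne'
    push_cast
    field_simp
    ring, eChar_add_int]

lemma gK_B1 (hD1 : 0 < D1) (hND1 : (N:ℤ) ∣ (D1:ℤ)) :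
    gK N n1 n2 m1 m2 D1 D2 (B1 + D1) C1 Y1 Z1 B2 (C2 - B2) (Y2 + Z2) Z2
    = gK N n1 n2 m1 m2 D1 D2 B1 C1 Y1 Z1 B2 C2 Y2 Z2 := by
  unfold gK
  rw [show (D1:ℤ) * (C2 - B2) + (B1 + D1) * B2 + D2 * C1 = (D1:ℤ) * C2 + B1 * B2 + D2 * C1 by ring,
     show Y1 * (B1 + D1) + Z1 * C1 = (Y1 * B1 + Z1 * C1) + (D1:ℤ) * Y1 by ring,
     Int.add_mul_emod_self_left,
     show (Y2 + Z2) * B2 + Z2 * (C2 - B2) = Y2 * B2 + Z2 * C2 by ring]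
  have hdvd : ((N:ℤ) ∣ B1 + D1) ↔ ((N:ℤ) ∣ B1) := by
    constructor
    · intro h; have := dvd_sub h hND1; simpa using this
    · intro h; exact dvd_add h hND1
  refine if_congr (by rw [hdvd]) ?_ rfl
  rw [show ((n1 * (B1 + D1) + m1 * (Y1 * (D2:ℤ) - Z1 * B2) : ℤ) : ℝ) / D1 +
        ((n2 * B2 + m2 * ((Y2 + Z2) * (D1:ℤ) - Z2 * (B1 + D1)) : ℤ) : ℝ) / D2
      = (((n1 * B1 + m1 * (Y1 * D2 - Z1 * B2) : ℤ) : ℝ) / D1 +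
        ((n2 * B2 + m2 * (Y2 * D1 - Z2 * B1) : ℤ) : ℝ) / D2) + ((n1 : ℤ) : ℝ) from by
    have h1 : (D1:ℝ) ≠ 0 := Nat.cast_ne_zero.mpr hD1.ne'
    push_cast
    field_simp
    ring, eChar_add_int]

lemma gK_B2 (hD2 : 0 < D2) :
    gK N n1 n2 m1 m2 D1 D2 B1 (C1 - B1) (Y1 + Z1) Z1 (B2 + D2) C2 Y2 Z2
    = gK N n1 n2 m1 m2 D1 D2 B1 C1 Y1 Z1 B2 C2 Y2 Z2 := by
  unfold gK
  rw [show (D1:ℤ) * C2 + B1 * (B2 + D2) + D2 * (C1 - B1) = (D1:ℤ) * C2 + B1 * B2 + D2 * C1 by ring,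
     show (Y1 + Z1) * B1 + Z1 * (C1 - B1) = Y1 * B1 + Z1 * C1 by ring,
     show Y2 * (B2 + D2) + Z2 * C2 = (Y2 * B2 + Z2 * C2) + (D2:ℤ) * Y2 by ring,
     Int.add_mul_emod_self_left]
  refine if_congr Iff.rfl ?_ rfl
  rw [show ((n1 * B1 + m1 * ((Y1 + Z1) * (D2:ℤ) - Z1 * (B2 + D2)) : ℤ) : ℝ) / D1 +
        ((n2 * (B2 + D2) + m2 * (Y2 * (D1:ℤ) - Z2 * B1) : ℤ) : ℝ) / D2
      = (((n1 * B1 + m1 * (Y1 * D2 - Z1 * B2) : ℤ) : ℝ) / D1 +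
        ((n2 * B2 + m2 * (Y2 * D1 - Z2 * B1) : ℤ) : ℝ) / D2) + ((n2 : ℤ) : ℝ) from by
    have h2 : (D2:ℝ) ≠ 0 := Nat.cast_ne_zero.mpr hD2.ne'
    push_cast
    field_simp
    ring, eChar_add_int]

end

lemma iteMulIte {P Q : Prop} [Decidable P] [Decidable Q] (x y : ℂ) :
    (if P then x else 0) * (if Q then y else 0) = if P ∧ Q then x * y else 0 := by
  by_cases hP : P <;> by_cases hQ : Q <;> simp [hP, hQ]

lemma dvd_iff_of_sub {M X Y : ℤ} (h : M ∣ X - Y) : (M ∣ X ↔ M ∣ Y) := by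
  constructor
  · intro h2; have := dvd_sub h2 h; simpa using this
  · intro h2; have := dvd_add h h2; simpa using this

lemma modeq_one_iff_of_zmod {m : ℕ} {X Y : ℤ} (h : (X : ZMod m) = (Y : ZMod m)) :
    (X % (m:ℤ) = 1 % (m:ℤ)) ↔ (Y % (m:ℤ) = 1 % (m:ℤ)) := by
  have hXY : Int.ModEq (m:ℤ) X Y := (ZMod.intCast_eq_intCast_iff _ _ _).mp h
  exact ⟨fun h2 => hXY.symm.trans h2, fun h2 => hXY.trans h2⟩

lemma dvd_iff_of_zmod {m : ℕ} {X Y : ℤ} (h : (X : ZMod m) = (Y : ZMod m)) :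
    ((m:ℤ) ∣ X ↔ (m:ℤ) ∣ Y) := by
  rw [← ZMod.intCast_zmod_eq_zero_iff_dvd, ← ZMod.intCast_zmod_eq_zero_iff_dvd, h]

set_option maxHeartbeats 1000000 in
/-- The pointwise heart of twisted multiplicativity. -/
lemma heart (N t1 u1 t2 u2 : ℕ) (ht1 : 0 < t1) (ht2 : 0 < t2) (hu1 : 0 < u1) (hu2 : 0 < u2)
    (hcop : Nat.Coprime (t1 * t2) (u1 * u2)) (hN1 : N ∣ t1 * u1)
    (n1 n2 m1 m2 : ℤ) (u1i u2i t1i t2i : ℤ)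
    (hu1i : (u1i * u1) % ((t1 : ℤ) * t2) = 1 % ((t1 : ℤ) * t2))
    (hu2i : (u2i * u2) % ((t1 : ℤ) * t2) = 1 % ((t1 : ℤ) * t2))
    (ht1i : (t1i * t1) % ((u1 : ℤ) * u2) = 1 % ((u1 : ℤ) * u2))
    (ht2i : (t2i * t2) % ((u1 : ℤ) * u2) = 1 % ((u1 : ℤ) * u2))
    (B1 C1 Y1 Z1 B2 C2 Y2 Z2 : ℤ)
    (b1 c1 y1 z1 b2 c2 y2 z2 β1 γ1 η1 ζ1 β2 γ2 η2 ζ2 : ℤ)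
    (hB1T : (B1 : ZMod (t1*t2)) = ((u1i * u2 * b1 : ℤ) : ZMod (t1*t2)))
    (hB1U : (B1 : ZMod (u1*u2)) = ((t1i * t2 * β1 : ℤ) : ZMod (u1*u2)))
    (hB2T : (B2 : ZMod (t1*t2)) = ((u2i * u1 * b2 : ℤ) : ZMod (t1*t2)))
    (hB2U : (B2 : ZMod (u1*u2)) = ((t2i * t1 * β2 : ℤ) : ZMod (u1*u2)))
    (hC1t : (C1 : ZMod t1) = ((u2i * c1 : ℤ) : ZMod t1))
    (hC1u : (C1 : ZMod u1) = ((t2i * γ1 : ℤ) : ZMod u1))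
    (hY1t : (Y1 : ZMod t1) = ((u1 * u2i * y1 : ℤ) : ZMod t1))
    (hY1u : (Y1 : ZMod u1) = ((t1 * t2i * η1 : ℤ) : ZMod u1))
    (hZ1t : (Z1 : ZMod t1) = ((u2 * z1 : ℤ) : ZMod t1))
    (hZ1u : (Z1 : ZMod u1) = ((t2 * ζ1 : ℤ) : ZMod u1))
    (hC2t : (C2 : ZMod t2) = ((u1i * c2 : ℤ) : ZMod t2))
    (hC2u : (C2 : ZMod u2) = ((t1i * γ2 : ℤ) : ZMod u2))
    (hY2t : (Y2 : ZMod t2) = ((u2 * u1i * y2 : ℤ) : ZMod t2))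
    (hY2u : (Y2 : ZMod u2) = ((t2 * t1i * η2 : ℤ) : ZMod u2))
    (hZ2t : (Z2 : ZMod t2) = ((u1 * z2 : ℤ) : ZMod t2))
    (hZ2u : (Z2 : ZMod u2) = ((t1 * ζ2 : ℤ) : ZMod u2)) :
    gK N n1 n2 m1 m2 (t1*u1) (t2*u2) B1 C1 Y1 Z1 B2 C2 Y2 Z2
      = gK (N.gcd t1) (u1i^2 * u2 * n1) (u2i^2 * u1 * n2) m1 m2 t1 t2 b1 c1 y1 z1 b2 c2 y2 z2 *
        gK (N.gcd u1) (t1i^2 * t2 * n1) (t2i^2 * t1 * n2) m1 m2 u1 u2 β1 γ1 η1 ζ1 β2 γ2 η2 ζ2 := by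
  -- coprimality facts
  have hct1u1 : Nat.Coprime t1 u1 :=
    Nat.Coprime.coprime_dvd_left (dvd_mul_right t1 t2)
      (Nat.Coprime.coprime_dvd_right (dvd_mul_right u1 u2) hcop)
  have hct1u2 : Nat.Coprime t1 u2 :=
    Nat.Coprime.coprime_dvd_left (dvd_mul_right t1 t2)
      (Nat.Coprime.coprime_dvd_right (dvd_mul_left u2 u1) hcop)
  have hct2u2 : Nat.Coprime t2 u2 :=
    Nat.Coprime.coprime_dvd_left (dvd_mul_left t2 t1)
      (Nat.Coprime.coprime_dvd_right (dvd_mul_left u2 u1) hcop)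
  -- inverse facts in the relevant `ZMod`s
  have hg1T : ((N.gcd t1 : ℕ):ℤ) ∣ (t1:ℤ)*t2 :=
    (Int.natCast_dvd_natCast.mpr (Nat.gcd_dvd_right N t1)).trans (dvd_mul_right _ _)
  have hg2U : ((N.gcd u1 : ℕ):ℤ) ∣ (u1:ℤ)*u2 :=
    (Int.natCast_dvd_natCast.mpr (Nat.gcd_dvd_right N u1)).trans (dvd_mul_right _ _)
  have hTT : ((t1*t2 : ℕ):ℤ) ∣ (t1:ℤ)*t2 := by push_cast; exact dvd_rfl
  have hUU : ((u1*u2 : ℕ):ℤ) ∣ (u1:ℤ)*u2 := by push_cast; exact dvd_rfl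
  have I1t1 : (u1i : ZMod t1) * (u1 : ZMod t1) = 1 := by
    have h := inv_fact t1 ((t1:ℤ)*t2) (dvd_mul_right _ _) hu1i; push_cast at h; exact h
  have I2t1 : (u2i : ZMod t1) * (u2 : ZMod t1) = 1 := by
    have h := inv_fact t1 ((t1:ℤ)*t2) (dvd_mul_right _ _) hu2i; push_cast at h; exact h
  have I1t2 : (u1i : ZMod t2) * (u1 : ZMod t2) = 1 := by
    have h := inv_fact t2 ((t1:ℤ)*t2) (dvd_mul_left _ _) hu1i; push_cast at h; exact h
  have I2t2 : (u2i : ZMod t2) * (u2 : ZMod t2) = 1 := by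
    have h := inv_fact t2 ((t1:ℤ)*t2) (dvd_mul_left _ _) hu2i; push_cast at h; exact h
  have I1T : (u1i : ZMod (t1*t2)) * (u1 : ZMod (t1*t2)) = 1 := by
    have h := inv_fact (t1*t2) ((t1:ℤ)*t2) hTT hu1i; push_cast at h; exact h
  have I2T : (u2i : ZMod (t1*t2)) * (u2 : ZMod (t1*t2)) = 1 := by
    have h := inv_fact (t1*t2) ((t1:ℤ)*t2) hTT hu2i; push_cast at h; exact h
  have I1g : (u1i : ZMod (N.gcd t1)) * (u1 : ZMod (N.gcd t1)) = 1 := by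
    have h := inv_fact (N.gcd t1) ((t1:ℤ)*t2) hg1T hu1i; push_cast at h; exact h
  have I2g : (u2i : ZMod (N.gcd t1)) * (u2 : ZMod (N.gcd t1)) = 1 := by
    have h := inv_fact (N.gcd t1) ((t1:ℤ)*t2) hg1T hu2i; push_cast at h; exact h
  have J1u1 : (t1i : ZMod u1) * (t1 : ZMod u1) = 1 := by
    have h := inv_fact u1 ((u1:ℤ)*u2) (dvd_mul_right _ _) ht1i; push_cast at h; exact h
  have J2u1 : (t2i : ZMod u1) * (t2 : ZMod u1) = 1 := by
    have h := inv_fact u1 ((u1:ℤ)*u2) (dvd_mul_right _ _) ht2i; push_cast at h; exact h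
  have J1u2 : (t1i : ZMod u2) * (t1 : ZMod u2) = 1 := by
    have h := inv_fact u2 ((u1:ℤ)*u2) (dvd_mul_left _ _) ht1i; push_cast at h; exact h
  have J2u2 : (t2i : ZMod u2) * (t2 : ZMod u2) = 1 := by
    have h := inv_fact u2 ((u1:ℤ)*u2) (dvd_mul_left _ _) ht2i; push_cast at h; exact h
  have J1U : (t1i : ZMod (u1*u2)) * (t1 : ZMod (u1*u2)) = 1 := by
    have h := inv_fact (u1*u2) ((u1:ℤ)*u2) hUU ht1i; push_cast at h; exact h
  have J2U : (t2i : ZMod (u1*u2)) * (t2 : ZMod (u1*u2)) = 1 := by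
    have h := inv_fact (u1*u2) ((u1:ℤ)*u2) hUU ht2i; push_cast at h; exact h
  have J1g : (t1i : ZMod (N.gcd u1)) * (t1 : ZMod (N.gcd u1)) = 1 := by
    have h := inv_fact (N.gcd u1) ((u1:ℤ)*u2) hg2U ht1i; push_cast at h; exact h
  have J2g : (t2i : ZMod (N.gcd u1)) * (t2 : ZMod (N.gcd u1)) = 1 := by
    have h := inv_fact (N.gcd u1) ((u1:ℤ)*u2) hg2U ht2i; push_cast at h; exact h
  -- zero facts
  have Zt1 : ((t1:ℕ) : ZMod t1) = 0 := ZMod.natCast_self t1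
  have Zt2 : ((t2:ℕ) : ZMod t2) = 0 := ZMod.natCast_self t2
  have Zu1 : ((u1:ℕ) : ZMod u1) = 0 := ZMod.natCast_self u1
  have Zu2 : ((u2:ℕ) : ZMod u2) = 0 := ZMod.natCast_self u2
  have Zg1 : ((t1:ℕ) : ZMod (N.gcd t1)) = 0 :=
    (ZMod.natCast_eq_zero_iff _ _).mpr (Nat.gcd_dvd_right N t1)
  have Zg2 : ((u1:ℕ) : ZMod (N.gcd u1)) = 0 :=
    (ZMod.natCast_eq_zero_iff _ _).mpr (Nat.gcd_dvd_right N u1)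
  -- downcasts of the main congruences
  have hB1t := zmod_down (dvd_mul_right t1 t2) hB1T
  have hB1t2 := zmod_down (dvd_mul_left t2 t1) hB1T
  have hB2t := zmod_down (dvd_mul_right t1 t2) hB2T
  have hB2t2 := zmod_down (dvd_mul_left t2 t1) hB2T
  have hB1u := zmod_down (dvd_mul_right u1 u2) hB1U
  have hB1u2 := zmod_down (dvd_mul_left u2 u1) hB1U
  have hB2u := zmod_down (dvd_mul_right u1 u2) hB2U
  have hB2u2 := zmod_down (dvd_mul_left u2 u1) hB2U
  have hB1g1 := zmod_down ((Nat.gcd_dvd_right N t1).trans (dvd_mul_right t1 t2)) hB1T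
  have hB1g2 := zmod_down ((Nat.gcd_dvd_right N u1).trans (dvd_mul_right u1 u2)) hB1U
  push_cast at hB1t hB1t2 hB2t hB2t2 hB1u hB1u2 hB2u hB2u2 hB1g1 hB1g2
  push_cast at hB1T hB1U hB2T hB2U hC1t hC1u hY1t hY1u hZ1t hZ1u hC2t hC2u hY2t hY2u hZ2t hZ2u
  -- P2 : the level condition
  have P2 : ((N:ℤ) ∣ B1) ↔ (((N.gcd t1 : ℕ):ℤ) ∣ b1 ∧ ((N.gcd u1 : ℕ):ℤ) ∣ β1) := by
    have hNg : (N:ℤ) = ((N.gcd t1 : ℕ):ℤ) * ((N.gcd u1 : ℕ):ℤ) := by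
      have := (Nat.gcd_mul_gcd_eq_iff_dvd_mul_of_coprime hct1u1 (x := N)).mpr hN1
      exact_mod_cast this.symm
    have hcopg : IsCoprime ((N.gcd t1 : ℕ):ℤ) ((N.gcd u1 : ℕ):ℤ) :=
      Nat.isCoprime_iff_coprime.mpr
        (Nat.Coprime.coprime_dvd_left (Nat.gcd_dvd_right N t1)
          (Nat.Coprime.coprime_dvd_right (Nat.gcd_dvd_right N u1) hct1u1))
    have e1 : (((N.gcd t1 : ℕ):ℤ) ∣ B1) ↔ (((N.gcd t1 : ℕ):ℤ) ∣ b1) := by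
      rw [← ZMod.intCast_zmod_eq_zero_iff_dvd, ← ZMod.intCast_zmod_eq_zero_iff_dvd]
      constructor
      · intro h
        have hXz : (u1i : ZMod (N.gcd t1)) * (u2 : ZMod (N.gcd t1)) * (b1 : ZMod (N.gcd t1)) = 0 := by
          rw [← hB1g1]; exact h
        linear_combination ((u1 : ZMod (N.gcd t1)) * (u2i : ZMod (N.gcd t1))) * hXz
          - ((b1 : ZMod (N.gcd t1)) * (u2 : ZMod (N.gcd t1)) * (u2i : ZMod (N.gcd t1))) * I1g
          - (b1 : ZMod (N.gcd t1)) * I2g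
      · intro h
        push_cast
        rw [hB1g1]
        push_cast at h
        linear_combination ((u1i : ZMod (N.gcd t1)) * (u2 : ZMod (N.gcd t1))) * h
    have e2 : (((N.gcd u1 : ℕ):ℤ) ∣ B1) ↔ (((N.gcd u1 : ℕ):ℤ) ∣ β1) := by
      rw [← ZMod.intCast_zmod_eq_zero_iff_dvd, ← ZMod.intCast_zmod_eq_zero_iff_dvd]
      constructor
      · intro h
        have hXz : (t1i : ZMod (N.gcd u1)) * (t2 : ZMod (N.gcd u1)) * (β1 : ZMod (N.gcd u1)) = 0 := by
          rw [← hB1g2]; exact h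
        linear_combination ((t1 : ZMod (N.gcd u1)) * (t2i : ZMod (N.gcd u1))) * hXz
          - ((β1 : ZMod (N.gcd u1)) * (t2 : ZMod (N.gcd u1)) * (t2i : ZMod (N.gcd u1))) * J1g
          - (β1 : ZMod (N.gcd u1)) * J2g
      · intro h
        push_cast
        rw [hB1g2]
        push_cast at h
        linear_combination ((t1i : ZMod (N.gcd u1)) * (t2 : ZMod (N.gcd u1))) * h
    rw [hNg, ← e1, ← e2]
    exact ⟨fun h => ⟨(dvd_mul_right _ _).trans h, (dvd_mul_left _ _).trans h⟩,
      fun ⟨h1, h2⟩ => hcopg.mul_dvd h1 h2⟩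
  -- P1 : the compatibility condition
  have hA : (t2:ℤ) ∣ ((u1:ℤ) * C2 - c2) := by
    rw [← ZMod.intCast_zmod_eq_zero_iff_dvd]
    push_cast
    linear_combination (u1 : ZMod t2) * hC2t + (c2 : ZMod t2) * I1t2
  have hB : (t1:ℤ) ∣ ((u2:ℤ) * C1 - c1) := by
    rw [← ZMod.intCast_zmod_eq_zero_iff_dvd]
    push_cast
    linear_combination (u2 : ZMod t1) * hC1t + (c1 : ZMod t1) * I2t1
  have hC : ((t1*t2 : ℕ):ℤ) ∣ (B1 * B2 - b1 * b2) := by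
    rw [← ZMod.intCast_zmod_eq_zero_iff_dvd]
    push_cast
    linear_combination (B2 : ZMod (t1*t2)) * hB1T
      + ((u1i : ZMod (t1*t2)) * (u2 : ZMod (t1*t2)) * (b1 : ZMod (t1*t2))) * hB2T
      + ((b1 : ZMod (t1*t2)) * (b2 : ZMod (t1*t2)) * (u2 : ZMod (t1*t2)) * (u2i : ZMod (t1*t2))) * I1T
      + ((b1 : ZMod (t1*t2)) * (b2 : ZMod (t1*t2))) * I2T
  have hA' : (u2:ℤ) ∣ ((t1:ℤ) * C2 - γ2) := by
    rw [← ZMod.intCast_zmod_eq_zero_iff_dvd]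
    push_cast
    linear_combination (t1 : ZMod u2) * hC2u + (γ2 : ZMod u2) * J1u2
  have hB' : (u1:ℤ) ∣ ((t2:ℤ) * C1 - γ1) := by
    rw [← ZMod.intCast_zmod_eq_zero_iff_dvd]
    push_cast
    linear_combination (t2 : ZMod u1) * hC1u + (γ1 : ZMod u1) * J2u1
  have hC' : ((u1*u2 : ℕ):ℤ) ∣ (B1 * B2 - β1 * β2) := by
    rw [← ZMod.intCast_zmod_eq_zero_iff_dvd]
    push_cast
    linear_combination (B2 : ZMod (u1*u2)) * hB1U
      + ((t1i : ZMod (u1*u2)) * (t2 : ZMod (u1*u2)) * (β1 : ZMod (u1*u2))) * hB2U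
      + ((β1 : ZMod (u1*u2)) * (β2 : ZMod (u1*u2)) * (t2 : ZMod (u1*u2)) * (t2i : ZMod (u1*u2))) * J1U
      + ((β1 : ZMod (u1*u2)) * (β2 : ZMod (u1*u2))) * J2U
  have hdvdT : ((t1*t2 : ℕ):ℤ) ∣ ((((t1*u1 : ℕ):ℤ) * C2 + B1 * B2 + ((t2*u2 : ℕ):ℤ) * C1)
      - ((t1:ℤ) * c2 + b1 * b2 + (t2:ℤ) * c1)) := by
    obtain ⟨kA, hkA⟩ := hA
    obtain ⟨kB, hkB⟩ := hB
    obtain ⟨kC, hkC⟩ := hC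
    refine ⟨kA + kC + kB, ?_⟩
    push_cast at hkC ⊢
    linear_combination (t1:ℤ) * hkA + hkC + (t2:ℤ) * hkB
  have hdvdU : ((u1*u2 : ℕ):ℤ) ∣ ((((t1*u1 : ℕ):ℤ) * C2 + B1 * B2 + ((t2*u2 : ℕ):ℤ) * C1)
      - ((u1:ℤ) * γ2 + β1 * β2 + (u2:ℤ) * γ1)) := by
    obtain ⟨kA, hkA⟩ := hA'
    obtain ⟨kB, hkB⟩ := hB'
    obtain ⟨kC, hkC⟩ := hC'
    refine ⟨kA + kC + kB, ?_⟩
    push_cast at hkC ⊢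
    linear_combination (u1:ℤ) * hkA + hkC + (u2:ℤ) * hkB
  have P1 : ((((t1*u1 : ℕ):ℤ)) * C2 + B1 * B2 + (((t2*u2 : ℕ):ℤ)) * C1) % (((t1*u1 : ℕ):ℤ) * ((t2*u2 : ℕ):ℤ)) = 0
      ↔ (((t1:ℤ) * c2 + b1 * b2 + (t2:ℤ) * c1) % ((t1:ℤ) * (t2:ℤ)) = 0
        ∧ ((u1:ℤ) * γ2 + β1 * β2 + (u2:ℤ) * γ1) % ((u1:ℤ) * (u2:ℤ)) = 0) := by
    have hM : ((t1*u1 : ℕ):ℤ) * ((t2*u2 : ℕ):ℤ) = ((t1*t2 : ℕ):ℤ) * ((u1*u2 : ℕ):ℤ) := by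
      push_cast; ring
    have hicop : IsCoprime ((t1*t2 : ℕ):ℤ) ((u1*u2 : ℕ):ℤ) := Nat.isCoprime_iff_coprime.mpr hcop
    have hTc : ((t1:ℤ) * (t2:ℤ)) = ((t1*t2 : ℕ):ℤ) := by push_cast; ring
    have hUc : ((u1:ℤ) * (u2:ℤ)) = ((u1*u2 : ℕ):ℤ) := by push_cast; ring
    rw [hM, hTc, hUc]
    constructor
    · intro h
      have hd := Int.dvd_of_emod_eq_zero h
      have h1 : ((t1*t2 : ℕ):ℤ) ∣ _ := (dvd_mul_right _ _).trans hd
      have h2 : ((u1*u2 : ℕ):ℤ) ∣ _ := (dvd_mul_left _ _).trans hd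
      exact ⟨Int.emod_eq_zero_of_dvd ((dvd_iff_of_sub hdvdT).mp h1),
        Int.emod_eq_zero_of_dvd ((dvd_iff_of_sub hdvdU).mp h2)⟩
    · rintro ⟨h1, h2⟩
      refine Int.emod_eq_zero_of_dvd (hicop.mul_dvd ?_ ?_)
      · exact (dvd_iff_of_sub hdvdT).mpr (Int.dvd_of_emod_eq_zero h1)
      · exact (dvd_iff_of_sub hdvdU).mpr (Int.dvd_of_emod_eq_zero h2)
  -- P3, P4 : the Bezout conditions
  have hX1t : ((Y1 * B1 + Z1 * C1 : ℤ) : ZMod t1) = ((y1 * b1 + z1 * c1 : ℤ) : ZMod t1) := by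
    push_cast
    linear_combination (Y1 : ZMod t1) * hB1t
      + ((u1i : ZMod t1) * (u2 : ZMod t1) * (b1 : ZMod t1)) * hY1t
      + (Z1 : ZMod t1) * hC1t
      + ((u2i : ZMod t1) * (c1 : ZMod t1)) * hZ1t
      + ((y1 : ZMod t1) * (b1 : ZMod t1) * (u2 : ZMod t1) * (u2i : ZMod t1)) * I1t1
      + ((y1 : ZMod t1) * (b1 : ZMod t1) + (z1 : ZMod t1) * (c1 : ZMod t1)) * I2t1
  have hX1u : ((Y1 * B1 + Z1 * C1 : ℤ) : ZMod u1) = ((η1 * β1 + ζ1 * γ1 : ℤ) : ZMod u1) := by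
    push_cast
    linear_combination (Y1 : ZMod u1) * hB1u
      + ((t1i : ZMod u1) * (t2 : ZMod u1) * (β1 : ZMod u1)) * hY1u
      + (Z1 : ZMod u1) * hC1u
      + ((t2i : ZMod u1) * (γ1 : ZMod u1)) * hZ1u
      + ((η1 : ZMod u1) * (β1 : ZMod u1) * (t2 : ZMod u1) * (t2i : ZMod u1)) * J1u1
      + ((η1 : ZMod u1) * (β1 : ZMod u1) + (ζ1 : ZMod u1) * (γ1 : ZMod u1)) * J2u1
  have hX2t : ((Y2 * B2 + Z2 * C2 : ℤ) : ZMod t2) = ((y2 * b2 + z2 * c2 : ℤ) : ZMod t2) := by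
    push_cast
    linear_combination (Y2 : ZMod t2) * hB2t2
      + ((u2i : ZMod t2) * (u1 : ZMod t2) * (b2 : ZMod t2)) * hY2t
      + (Z2 : ZMod t2) * hC2t
      + ((u1i : ZMod t2) * (c2 : ZMod t2)) * hZ2t
      + (((y2 : ZMod t2) * (b2 : ZMod t2) * (u2 : ZMod t2) * (u2i : ZMod t2))
          + (z2 : ZMod t2) * (c2 : ZMod t2)) * I1t2
      + ((y2 : ZMod t2) * (b2 : ZMod t2)) * I2t2
  have hX2u : ((Y2 * B2 + Z2 * C2 : ℤ) : ZMod u2) = ((η2 * β2 + ζ2 * γ2 : ℤ) : ZMod u2) := by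
    push_cast
    linear_combination (Y2 : ZMod u2) * hB2u2
      + ((t2i : ZMod u2) * (t1 : ZMod u2) * (β2 : ZMod u2)) * hY2u
      + (Z2 : ZMod u2) * hC2u
      + ((t1i : ZMod u2) * (γ2 : ZMod u2)) * hZ2u
      + (((η2 : ZMod u2) * (β2 : ZMod u2) * (t2 : ZMod u2) * (t2i : ZMod u2))
          + (ζ2 : ZMod u2) * (γ2 : ZMod u2)) * J1u2
      + ((η2 : ZMod u2) * (β2 : ZMod u2)) * J2u2
  have P3 : ((Y1 * B1 + Z1 * C1) % (((t1*u1 : ℕ):ℤ)) = 1 % (((t1*u1 : ℕ):ℤ)))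
      ↔ (((y1 * b1 + z1 * c1) % ((t1:ℤ)) = 1 % ((t1:ℤ)))
        ∧ ((η1 * β1 + ζ1 * γ1) % ((u1:ℤ)) = 1 % ((u1:ℤ)))) := by
    have hsplit : ((Y1 * B1 + Z1 * C1) ≡ 1 [ZMOD (t1:ℤ)] ∧ (Y1 * B1 + Z1 * C1) ≡ 1 [ZMOD (u1:ℤ)])
        ↔ (Y1 * B1 + Z1 * C1) ≡ 1 [ZMOD ((t1:ℤ)*(u1:ℤ))] :=
      Int.modEq_and_modEq_iff_modEq_mul (by simpa using hct1u1)
    have hcast : ((t1*u1 : ℕ):ℤ) = (t1:ℤ)*(u1:ℤ) := by push_cast; ring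
    rw [hcast]
    rw [show ((Y1 * B1 + Z1 * C1) % ((t1:ℤ)*(u1:ℤ)) = 1 % ((t1:ℤ)*(u1:ℤ)))
        = ((Y1 * B1 + Z1 * C1) ≡ 1 [ZMOD ((t1:ℤ)*(u1:ℤ))]) from rfl]
    rw [← hsplit]
    exact and_congr (modeq_one_iff_of_zmod hX1t) (modeq_one_iff_of_zmod hX1u)
  have P4 : ((Y2 * B2 + Z2 * C2) % (((t2*u2 : ℕ):ℤ)) = 1 % (((t2*u2 : ℕ):ℤ)))
      ↔ (((y2 * b2 + z2 * c2) % ((t2:ℤ)) = 1 % ((t2:ℤ)))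
        ∧ ((η2 * β2 + ζ2 * γ2) % ((u2:ℤ)) = 1 % ((u2:ℤ)))) := by
    have hsplit : ((Y2 * B2 + Z2 * C2) ≡ 1 [ZMOD (t2:ℤ)] ∧ (Y2 * B2 + Z2 * C2) ≡ 1 [ZMOD (u2:ℤ)])
        ↔ (Y2 * B2 + Z2 * C2) ≡ 1 [ZMOD ((t2:ℤ)*(u2:ℤ))] :=
      Int.modEq_and_modEq_iff_modEq_mul (by simpa using hct2u2)
    have hcast : ((t2*u2 : ℕ):ℤ) = (t2:ℤ)*(u2:ℤ) := by push_cast; ring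
    rw [hcast]
    rw [show ((Y2 * B2 + Z2 * C2) % ((t2:ℤ)*(u2:ℤ)) = 1 % ((t2:ℤ)*(u2:ℤ)))
        = ((Y2 * B2 + Z2 * C2) ≡ 1 [ZMOD ((t2:ℤ)*(u2:ℤ))]) from rfl]
    rw [← hsplit]
    exact and_congr (modeq_one_iff_of_zmod hX2t) (modeq_one_iff_of_zmod hX2u)
  -- the exponent
  have hW1t : (t1:ℤ) ∣ ((n1 * B1 + m1 * (Y1 * ((t2*u2 : ℕ):ℤ) - Z1 * B2))
      - (u1:ℤ) * ((u1i^2*u2*n1) * b1 + m1 * (y1 * (t2:ℤ) - z1 * b2))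
      - (t1:ℤ) * ((t1i^2*t2*n1) * β1 + m1 * (η1 * (u2:ℤ) - ζ1 * β2))) := by
    rw [← ZMod.intCast_zmod_eq_zero_iff_dvd]
    push_cast
    linear_combination (n1 : ZMod t1) * hB1t
      + ((m1 : ZMod t1) * (t2 : ZMod t1) * (u2 : ZMod t1)) * hY1t
      + (-(m1 : ZMod t1) * (B2 : ZMod t1)) * hZ1t
      + (-(m1 : ZMod t1) * (u2 : ZMod t1) * (z1 : ZMod t1)) * hB2t
      + (-(n1 : ZMod t1) * (u1i : ZMod t1) * (u2 : ZMod t1) * (b1 : ZMod t1)) * I1t1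
      + ((m1 : ZMod t1) * (u1 : ZMod t1) * (y1 : ZMod t1) * (t2 : ZMod t1)
          - (m1 : ZMod t1) * (u1 : ZMod t1) * (z1 : ZMod t1) * (b2 : ZMod t1)) * I2t1
      + (-((t1i : ZMod t1)^2 * (t2 : ZMod t1) * (n1 : ZMod t1) * (β1 : ZMod t1)
          + (m1 : ZMod t1) * ((η1 : ZMod t1) * (u2 : ZMod t1) - (ζ1 : ZMod t1) * (β2 : ZMod t1)))) * Zt1
  have hW1u : (u1:ℤ) ∣ ((n1 * B1 + m1 * (Y1 * ((t2*u2 : ℕ):ℤ) - Z1 * B2))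
      - (u1:ℤ) * ((u1i^2*u2*n1) * b1 + m1 * (y1 * (t2:ℤ) - z1 * b2))
      - (t1:ℤ) * ((t1i^2*t2*n1) * β1 + m1 * (η1 * (u2:ℤ) - ζ1 * β2))) := by
    rw [← ZMod.intCast_zmod_eq_zero_iff_dvd]
    push_cast
    linear_combination (n1 : ZMod u1) * hB1u
      + ((m1 : ZMod u1) * (t2 : ZMod u1) * (u2 : ZMod u1)) * hY1u
      + (-(m1 : ZMod u1) * (B2 : ZMod u1)) * hZ1u
      + (-(m1 : ZMod u1) * (t2 : ZMod u1) * (ζ1 : ZMod u1)) * hB2u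
      + (-(n1 : ZMod u1) * (t1i : ZMod u1) * (t2 : ZMod u1) * (β1 : ZMod u1)) * J1u1
      + ((m1 : ZMod u1) * (t1 : ZMod u1) * (η1 : ZMod u1) * (u2 : ZMod u1)
          - (m1 : ZMod u1) * (t1 : ZMod u1) * (ζ1 : ZMod u1) * (β2 : ZMod u1)) * J2u1
      + (-((u1i : ZMod u1)^2 * (u2 : ZMod u1) * (n1 : ZMod u1) * (b1 : ZMod u1)
          + (m1 : ZMod u1) * ((y1 : ZMod u1) * (t2 : ZMod u1) - (z1 : ZMod u1) * (b2 : ZMod u1)))) * Zu1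
  have hW2t : (t2:ℤ) ∣ ((n2 * B2 + m2 * (Y2 * ((t1*u1 : ℕ):ℤ) - Z2 * B1))
      - (u2:ℤ) * ((u2i^2*u1*n2) * b2 + m2 * (y2 * (t1:ℤ) - z2 * b1))
      - (t2:ℤ) * ((t2i^2*t1*n2) * β2 + m2 * (η2 * (u1:ℤ) - ζ2 * β1))) := by
    rw [← ZMod.intCast_zmod_eq_zero_iff_dvd]
    push_cast
    linear_combination (n2 : ZMod t2) * hB2t2
      + ((m2 : ZMod t2) * (t1 : ZMod t2) * (u1 : ZMod t2)) * hY2t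
      + (-(m2 : ZMod t2) * (B1 : ZMod t2)) * hZ2t
      + (-(m2 : ZMod t2) * (u1 : ZMod t2) * (z2 : ZMod t2)) * hB1t2
      + (-(n2 : ZMod t2) * (u2i : ZMod t2) * (u1 : ZMod t2) * (b2 : ZMod t2)) * I2t2
      + ((m2 : ZMod t2) * (u2 : ZMod t2) * (y2 : ZMod t2) * (t1 : ZMod t2)
          - (m2 : ZMod t2) * (u2 : ZMod t2) * (z2 : ZMod t2) * (b1 : ZMod t2)) * I1t2
      + (-((t2i : ZMod t2)^2 * (t1 : ZMod t2) * (n2 : ZMod t2) * (β2 : ZMod t2)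
          + (m2 : ZMod t2) * ((η2 : ZMod t2) * (u1 : ZMod t2) - (ζ2 : ZMod t2) * (β1 : ZMod t2)))) * Zt2
  have hW2u : (u2:ℤ) ∣ ((n2 * B2 + m2 * (Y2 * ((t1*u1 : ℕ):ℤ) - Z2 * B1))
      - (u2:ℤ) * ((u2i^2*u1*n2) * b2 + m2 * (y2 * (t1:ℤ) - z2 * b1))
      - (t2:ℤ) * ((t2i^2*t1*n2) * β2 + m2 * (η2 * (u1:ℤ) - ζ2 * β1))) := by
    rw [← ZMod.intCast_zmod_eq_zero_iff_dvd]
    push_cast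
    linear_combination (n2 : ZMod u2) * hB2u2
      + ((m2 : ZMod u2) * (t1 : ZMod u2) * (u1 : ZMod u2)) * hY2u
      + (-(m2 : ZMod u2) * (B1 : ZMod u2)) * hZ2u
      + (-(m2 : ZMod u2) * (t1 : ZMod u2) * (ζ2 : ZMod u2)) * hB1u2
      + (-(n2 : ZMod u2) * (t2i : ZMod u2) * (t1 : ZMod u2) * (β2 : ZMod u2)) * J2u2
      + ((m2 : ZMod u2) * (t2 : ZMod u2) * (η2 : ZMod u2) * (u1 : ZMod u2)
          - (m2 : ZMod u2) * (t2 : ZMod u2) * (ζ2 : ZMod u2) * (β1 : ZMod u2)) * J1u2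
      + (-((u2i : ZMod u2)^2 * (u1 : ZMod u2) * (n2 : ZMod u2) * (b2 : ZMod u2)
          + (m2 : ZMod u2) * ((y2 : ZMod u2) * (t1 : ZMod u2) - (z2 : ZMod u2) * (b1 : ZMod u2)))) * Zu2
  obtain ⟨k1, hk1⟩ : ((t1*u1 : ℕ):ℤ) ∣ ((n1 * B1 + m1 * (Y1 * ((t2*u2 : ℕ):ℤ) - Z1 * B2))
      - (u1:ℤ) * ((u1i^2*u2*n1) * b1 + m1 * (y1 * (t2:ℤ) - z1 * b2))
      - (t1:ℤ) * ((t1i^2*t2*n1) * β1 + m1 * (η1 * (u2:ℤ) - ζ1 * β2))) := by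
    push_cast
    exact (Nat.isCoprime_iff_coprime.mpr hct1u1).mul_dvd hW1t hW1u
  obtain ⟨k2, hk2⟩ : ((t2*u2 : ℕ):ℤ) ∣ ((n2 * B2 + m2 * (Y2 * ((t1*u1 : ℕ):ℤ) - Z2 * B1))
      - (u2:ℤ) * ((u2i^2*u1*n2) * b2 + m2 * (y2 * (t1:ℤ) - z2 * b1))
      - (t2:ℤ) * ((t2i^2*t1*n2) * β2 + m2 * (η2 * (u1:ℤ) - ζ2 * β1))) := by
    push_cast
    exact (Nat.isCoprime_iff_coprime.mpr hct2u2).mul_dvd hW2t hW2u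
  have hk1R : ((n1 * B1 + m1 * (Y1 * ((t2*u2 : ℕ):ℤ) - Z1 * B2) : ℤ) : ℝ)
      = (u1:ℝ) * (((u1i^2*u2*n1) * b1 + m1 * (y1 * (t2:ℤ) - z1 * b2) : ℤ) : ℝ)
      + (t1:ℝ) * (((t1i^2*t2*n1) * β1 + m1 * (η1 * (u2:ℤ) - ζ1 * β2) : ℤ) : ℝ)
      + ((t1:ℝ) * (u1:ℝ)) * (k1 : ℝ) := by
    have := congrArg (fun x : ℤ => (x : ℝ)) hk1
    push_cast at this ⊢
    linarith [this]
  have hk2R : ((n2 * B2 + m2 * (Y2 * ((t1*u1 : ℕ):ℤ) - Z2 * B1) : ℤ) : ℝ)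
      = (u2:ℝ) * (((u2i^2*u1*n2) * b2 + m2 * (y2 * (t1:ℤ) - z2 * b1) : ℤ) : ℝ)
      + (t2:ℝ) * (((t2i^2*t1*n2) * β2 + m2 * (η2 * (u1:ℤ) - ζ2 * β1) : ℤ) : ℝ)
      + ((t2:ℝ) * (u2:ℝ)) * (k2 : ℝ) := by
    have := congrArg (fun x : ℤ => (x : ℝ)) hk2
    push_cast at this ⊢
    linarith [this]
  have hT1R : (t1:ℝ) ≠ 0 := Nat.cast_ne_zero.mpr ht1.ne'
  have hT2R : (t2:ℝ) ≠ 0 := Nat.cast_ne_zero.mpr ht2.ne'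
  have hU1R : (u1:ℝ) ≠ 0 := Nat.cast_ne_zero.mpr hu1.ne'
  have hU2R : (u2:ℝ) ≠ 0 := Nat.cast_ne_zero.mpr hu2.ne'
  have hexp : eChar (((n1 * B1 + m1 * (Y1 * ((t2*u2 : ℕ):ℤ) - Z1 * B2) : ℤ) : ℝ) / ((t1*u1 : ℕ):ℝ) +
        ((n2 * B2 + m2 * (Y2 * ((t1*u1 : ℕ):ℤ) - Z2 * B1) : ℤ) : ℝ) / ((t2*u2 : ℕ):ℝ))
      = eChar ((((u1i^2*u2*n1) * b1 + m1 * (y1 * (t2:ℤ) - z1 * b2) : ℤ) : ℝ) / ((t1:ℕ):ℝ) +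
          (((u2i^2*u1*n2) * b2 + m2 * (y2 * (t1:ℤ) - z2 * b1) : ℤ) : ℝ) / ((t2:ℕ):ℝ)) *
        eChar ((((t1i^2*t2*n1) * β1 + m1 * (η1 * (u2:ℤ) - ζ1 * β2) : ℤ) : ℝ) / ((u1:ℕ):ℝ) +
          (((t2i^2*t1*n2) * β2 + m2 * (η2 * (u1:ℤ) - ζ2 * β1) : ℤ) : ℝ) / ((u2:ℕ):ℝ)) := by
    rw [← eChar_add]
    rw [show (((n1 * B1 + m1 * (Y1 * ((t2*u2 : ℕ):ℤ) - Z1 * B2) : ℤ) : ℝ) / ((t1*u1 : ℕ):ℝ) +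
        ((n2 * B2 + m2 * (Y2 * ((t1*u1 : ℕ):ℤ) - Z2 * B1) : ℤ) : ℝ) / ((t2*u2 : ℕ):ℝ))
      = ((((u1i^2*u2*n1) * b1 + m1 * (y1 * (t2:ℤ) - z1 * b2) : ℤ) : ℝ) / ((t1:ℕ):ℝ) +
          (((u2i^2*u1*n2) * b2 + m2 * (y2 * (t1:ℤ) - z2 * b1) : ℤ) : ℝ) / ((t2:ℕ):ℝ) +
         ((((t1i^2*t2*n1) * β1 + m1 * (η1 * (u2:ℤ) - ζ1 * β2) : ℤ) : ℝ) / ((u1:ℕ):ℝ) +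
          (((t2i^2*t1*n2) * β2 + m2 * (η2 * (u1:ℤ) - ζ2 * β1) : ℤ) : ℝ) / ((u2:ℕ):ℝ))) +
        ((k1 + k2 : ℤ) : ℝ) from by
      rw [hk1R, hk2R]
      push_cast
      field_simp
      ring]
    rw [eChar_add_int]
  unfold gK
  rw [iteMulIte]
  refine if_congr ?_ hexp rfl
  constructor
  · rintro ⟨h1, h2, h3, h4⟩
    obtain ⟨h1t, h1u⟩ := P1.mp h1
    obtain ⟨h2t, h2u⟩ := P2.mp h2
    obtain ⟨h3t, h3u⟩ := P3.mp h3
    obtain ⟨h4t, h4u⟩ := P4.mp h4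
    exact ⟨⟨h1t, h2t, h3t, h4t⟩, ⟨h1u, h2u, h3u, h4u⟩⟩
  · rintro ⟨⟨h1t, h2t, h3t, h4t⟩, ⟨h1u, h2u, h3u, h4u⟩⟩
    exact ⟨P1.mpr ⟨h1t, h1u⟩, P2.mpr ⟨h2t, h2u⟩, P3.mpr ⟨h3t, h3u⟩, P4.mpr ⟨h4t, h4u⟩⟩


lemma sum_pair_factor (s u : Finset ℕ) (X Y : ℕ → ℂ) :
    ∑ p ∈ s ×ˢ u, X p.1 * Y p.2 = (∑ x ∈ s, X x) * (∑ y ∈ u, Y y) := by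
  rw [Finset.sum_product]
  exact (Finset.sum_mul_sum s u X Y).symm

lemma factor8 (s1 s2 v1 v2 : Finset ℕ) (f h : ℕ → ℕ → ℕ → ℕ → ℕ → ℕ → ℕ → ℕ → ℂ) :
    (∑ p1 ∈ s1 ×ˢ v1, ∑ p2 ∈ s2 ×ˢ v2, ∑ p3 ∈ s1 ×ˢ v1, ∑ p4 ∈ s1 ×ˢ v1, ∑ p5 ∈ s1 ×ˢ v1, ∑ p6 ∈ s2 ×ˢ v2, ∑ p7 ∈ s2 ×ˢ v2, ∑ p8 ∈ s2 ×ˢ v2,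
        f p1.1 p3.1 p4.1 p5.1 p2.1 p6.1 p7.1 p8.1 * h p1.2 p3.2 p4.2 p5.2 p2.2 p6.2 p7.2 p8.2)
    = (∑ a1 ∈ s1, ∑ a2 ∈ s2, ∑ a3 ∈ s1, ∑ a4 ∈ s1, ∑ a5 ∈ s1, ∑ a6 ∈ s2, ∑ a7 ∈ s2, ∑ a8 ∈ s2,
        f a1 a3 a4 a5 a2 a6 a7 a8)
      * (∑ b1 ∈ v1, ∑ b2 ∈ v2, ∑ b3 ∈ v1, ∑ b4 ∈ v1, ∑ b5 ∈ v1, ∑ b6 ∈ v2, ∑ b7 ∈ v2, ∑ b8 ∈ v2,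
        h b1 b3 b4 b5 b2 b6 b7 b8) := by
  calc (∑ p1 ∈ s1 ×ˢ v1, ∑ p2 ∈ s2 ×ˢ v2, ∑ p3 ∈ s1 ×ˢ v1, ∑ p4 ∈ s1 ×ˢ v1, ∑ p5 ∈ s1 ×ˢ v1, ∑ p6 ∈ s2 ×ˢ v2, ∑ p7 ∈ s2 ×ˢ v2, ∑ p8 ∈ s2 ×ˢ v2,
        f p1.1 p3.1 p4.1 p5.1 p2.1 p6.1 p7.1 p8.1 * h p1.2 p3.2 p4.2 p5.2 p2.2 p6.2 p7.2 p8.2)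
    _ = ∑ p1 ∈ s1 ×ˢ v1, ∑ p2 ∈ s2 ×ˢ v2, ∑ p3 ∈ s1 ×ˢ v1, ∑ p4 ∈ s1 ×ˢ v1, ∑ p5 ∈ s1 ×ˢ v1, ∑ p6 ∈ s2 ×ˢ v2, ∑ p7 ∈ s2 ×ˢ v2,
        (∑ a8 ∈ s2, f p1.1 p3.1 p4.1 p5.1 p2.1 p6.1 p7.1 a8) * (∑ b8 ∈ v2, h p1.2 p3.2 p4.2 p5.2 p2.2 p6.2 p7.2 b8) := by
        refine Finset.sum_congr rfl fun p1 _ => Finset.sum_congr rfl fun p2 _ => Finset.sum_congr rfl fun p3 _ => Finset.sum_congr rfl fun p4 _ => Finset.sum_congr rfl fun p5 _ => Finset.sum_congr rfl fun p6 _ => Finset.sum_congr rfl fun p7 _ => ?_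
        exact sum_pair_factor s2 v2 (fun w => f p1.1 p3.1 p4.1 p5.1 p2.1 p6.1 p7.1 w) (fun w => h p1.2 p3.2 p4.2 p5.2 p2.2 p6.2 p7.2 w)
    _ = ∑ p1 ∈ s1 ×ˢ v1, ∑ p2 ∈ s2 ×ˢ v2, ∑ p3 ∈ s1 ×ˢ v1, ∑ p4 ∈ s1 ×ˢ v1, ∑ p5 ∈ s1 ×ˢ v1, ∑ p6 ∈ s2 ×ˢ v2,
        (∑ a7 ∈ s2, ∑ a8 ∈ s2, f p1.1 p3.1 p4.1 p5.1 p2.1 p6.1 a7 a8) * (∑ b7 ∈ v2, ∑ b8 ∈ v2, h p1.2 p3.2 p4.2 p5.2 p2.2 p6.2 b7 b8) := by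
        refine Finset.sum_congr rfl fun p1 _ => Finset.sum_congr rfl fun p2 _ => Finset.sum_congr rfl fun p3 _ => Finset.sum_congr rfl fun p4 _ => Finset.sum_congr rfl fun p5 _ => Finset.sum_congr rfl fun p6 _ => ?_
        exact sum_pair_factor s2 v2 (fun w => ∑ a8 ∈ s2, f p1.1 p3.1 p4.1 p5.1 p2.1 p6.1 w a8) (fun w => ∑ b8 ∈ v2, h p1.2 p3.2 p4.2 p5.2 p2.2 p6.2 w b8)
    _ = ∑ p1 ∈ s1 ×ˢ v1, ∑ p2 ∈ s2 ×ˢ v2, ∑ p3 ∈ s1 ×ˢ v1, ∑ p4 ∈ s1 ×ˢ v1, ∑ p5 ∈ s1 ×ˢ v1,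
        (∑ a6 ∈ s2, ∑ a7 ∈ s2, ∑ a8 ∈ s2, f p1.1 p3.1 p4.1 p5.1 p2.1 a6 a7 a8) * (∑ b6 ∈ v2, ∑ b7 ∈ v2, ∑ b8 ∈ v2, h p1.2 p3.2 p4.2 p5.2 p2.2 b6 b7 b8) := by
        refine Finset.sum_congr rfl fun p1 _ => Finset.sum_congr rfl fun p2 _ => Finset.sum_congr rfl fun p3 _ => Finset.sum_congr rfl fun p4 _ => Finset.sum_congr rfl fun p5 _ => ?_
        exact sum_pair_factor s2 v2 (fun w => ∑ a7 ∈ s2, ∑ a8 ∈ s2, f p1.1 p3.1 p4.1 p5.1 p2.1 w a7 a8) (fun w => ∑ b7 ∈ v2, ∑ b8 ∈ v2, h p1.2 p3.2 p4.2 p5.2 p2.2 w b7 b8)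
    _ = ∑ p1 ∈ s1 ×ˢ v1, ∑ p2 ∈ s2 ×ˢ v2, ∑ p3 ∈ s1 ×ˢ v1, ∑ p4 ∈ s1 ×ˢ v1,
        (∑ a5 ∈ s1, ∑ a6 ∈ s2, ∑ a7 ∈ s2, ∑ a8 ∈ s2, f p1.1 p3.1 p4.1 a5 p2.1 a6 a7 a8) * (∑ b5 ∈ v1, ∑ b6 ∈ v2, ∑ b7 ∈ v2, ∑ b8 ∈ v2, h p1.2 p3.2 p4.2 b5 p2.2 b6 b7 b8) := by
        refine Finset.sum_congr rfl fun p1 _ => Finset.sum_congr rfl fun p2 _ => Finset.sum_congr rfl fun p3 _ => Finset.sum_congr rfl fun p4 _ => ?_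
        exact sum_pair_factor s1 v1 (fun w => ∑ a6 ∈ s2, ∑ a7 ∈ s2, ∑ a8 ∈ s2, f p1.1 p3.1 p4.1 w p2.1 a6 a7 a8) (fun w => ∑ b6 ∈ v2, ∑ b7 ∈ v2, ∑ b8 ∈ v2, h p1.2 p3.2 p4.2 w p2.2 b6 b7 b8)
    _ = ∑ p1 ∈ s1 ×ˢ v1, ∑ p2 ∈ s2 ×ˢ v2, ∑ p3 ∈ s1 ×ˢ v1,
        (∑ a4 ∈ s1, ∑ a5 ∈ s1, ∑ a6 ∈ s2, ∑ a7 ∈ s2, ∑ a8 ∈ s2, f p1.1 p3.1 a4 a5 p2.1 a6 a7 a8) * (∑ b4 ∈ v1, ∑ b5 ∈ v1, ∑ b6 ∈ v2, ∑ b7 ∈ v2, ∑ b8 ∈ v2, h p1.2 p3.2 b4 b5 p2.2 b6 b7 b8) := by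
        refine Finset.sum_congr rfl fun p1 _ => Finset.sum_congr rfl fun p2 _ => Finset.sum_congr rfl fun p3 _ => ?_
        exact sum_pair_factor s1 v1 (fun w => ∑ a5 ∈ s1, ∑ a6 ∈ s2, ∑ a7 ∈ s2, ∑ a8 ∈ s2, f p1.1 p3.1 w a5 p2.1 a6 a7 a8) (fun w => ∑ b5 ∈ v1, ∑ b6 ∈ v2, ∑ b7 ∈ v2, ∑ b8 ∈ v2, h p1.2 p3.2 w b5 p2.2 b6 b7 b8)
    _ = ∑ p1 ∈ s1 ×ˢ v1, ∑ p2 ∈ s2 ×ˢ v2,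
        (∑ a3 ∈ s1, ∑ a4 ∈ s1, ∑ a5 ∈ s1, ∑ a6 ∈ s2, ∑ a7 ∈ s2, ∑ a8 ∈ s2, f p1.1 a3 a4 a5 p2.1 a6 a7 a8) * (∑ b3 ∈ v1, ∑ b4 ∈ v1, ∑ b5 ∈ v1, ∑ b6 ∈ v2, ∑ b7 ∈ v2, ∑ b8 ∈ v2, h p1.2 b3 b4 b5 p2.2 b6 b7 b8) := by
        refine Finset.sum_congr rfl fun p1 _ => Finset.sum_congr rfl fun p2 _ => ?_
        exact sum_pair_factor s1 v1 (fun w => ∑ a4 ∈ s1, ∑ a5 ∈ s1, ∑ a6 ∈ s2, ∑ a7 ∈ s2, ∑ a8 ∈ s2, f p1.1 w a4 a5 p2.1 a6 a7 a8) (fun w => ∑ b4 ∈ v1, ∑ b5 ∈ v1, ∑ b6 ∈ v2, ∑ b7 ∈ v2, ∑ b8 ∈ v2, h p1.2 w b4 b5 p2.2 b6 b7 b8)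
    _ = ∑ p1 ∈ s1 ×ˢ v1,
        (∑ a2 ∈ s2, ∑ a3 ∈ s1, ∑ a4 ∈ s1, ∑ a5 ∈ s1, ∑ a6 ∈ s2, ∑ a7 ∈ s2, ∑ a8 ∈ s2, f p1.1 a3 a4 a5 a2 a6 a7 a8) * (∑ b2 ∈ v2, ∑ b3 ∈ v1, ∑ b4 ∈ v1, ∑ b5 ∈ v1, ∑ b6 ∈ v2, ∑ b7 ∈ v2, ∑ b8 ∈ v2, h p1.2 b3 b4 b5 b2 b6 b7 b8) := by
        refine Finset.sum_congr rfl fun p1 _ => ?_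
        exact sum_pair_factor s2 v2 (fun w => ∑ a3 ∈ s1, ∑ a4 ∈ s1, ∑ a5 ∈ s1, ∑ a6 ∈ s2, ∑ a7 ∈ s2, ∑ a8 ∈ s2, f p1.1 a3 a4 a5 w a6 a7 a8) (fun w => ∑ b3 ∈ v1, ∑ b4 ∈ v1, ∑ b5 ∈ v1, ∑ b6 ∈ v2, ∑ b7 ∈ v2, ∑ b8 ∈ v2, h p1.2 b3 b4 b5 w b6 b7 b8)
    _ = (∑ a1 ∈ s1, ∑ a2 ∈ s2, ∑ a3 ∈ s1, ∑ a4 ∈ s1, ∑ a5 ∈ s1, ∑ a6 ∈ s2, ∑ a7 ∈ s2, ∑ a8 ∈ s2, f a1 a3 a4 a5 a2 a6 a7 a8) * (∑ b1 ∈ v1, ∑ b2 ∈ v2, ∑ b3 ∈ v1, ∑ b4 ∈ v1, ∑ b5 ∈ v1, ∑ b6 ∈ v2, ∑ b7 ∈ v2, ∑ b8 ∈ v2, h b1 b3 b4 b5 b2 b6 b7 b8) := by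
        exact sum_pair_factor s1 v1 (fun w => ∑ a2 ∈ s2, ∑ a3 ∈ s1, ∑ a4 ∈ s1, ∑ a5 ∈ s1, ∑ a6 ∈ s2, ∑ a7 ∈ s2, ∑ a8 ∈ s2, f w a3 a4 a5 a2 a6 a7 a8) (fun w => ∑ b2 ∈ v2, ∑ b3 ∈ v1, ∑ b4 ∈ v1, ∑ b5 ∈ v1, ∑ b6 ∈ v2, ∑ b7 ∈ v2, ∑ b8 ∈ v2, h w b3 b4 b5 b2 b6 b7 b8)

/-- twisted multiplicativity of the GL(3) Kloosterman sum:
if `D1 = t1 u1`, `D2 = t2 u2` with `(t1 t2, u1 u2) = 1`, `N ∣ t1 u1`, `N ∣ t2 u2`, then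
`S^{(N)}(n1,n2,m1,m2;t1u1,t2u2)
  = S^{(gcd(N,t1))}(ū1² u2 n1, ū2² u1 n2, m1, m2; t1, t2)
  · S^{(gcd(N,u1))}(t̄1² t2 n1, t̄2² t1 n2, m1, m2; u1, u2)`,
where `ū1 u1 ≡ ū2 u2 ≡ 1 (mod t1 t2)` and `t̄1 t1 ≡ t̄2 t2 ≡ 1 (mod u1 u2)`. -/
theorem kloosterman3_twisted_multiplicativity
    (N t1 u1 t2 u2 : ℕ) (hN : 0 < N) (ht1 : 0 < t1) (ht2 : 0 < t2)
    (hu1 : 0 < u1) (hu2 : 0 < u2)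
    (hcop : Nat.Coprime (t1 * t2) (u1 * u2))
    (hN1 : N ∣ t1 * u1) (hN2 : N ∣ t2 * u2)
    (n1 n2 m1 m2 : ℤ) (u1i u2i t1i t2i : ℤ)
    (hu1i : (u1i * u1) % ((t1 : ℤ) * t2) = 1 % ((t1 : ℤ) * t2))
    (hu2i : (u2i * u2) % ((t1 : ℤ) * t2) = 1 % ((t1 : ℤ) * t2))
    (ht1i : (t1i * t1) % ((u1 : ℤ) * u2) = 1 % ((u1 : ℤ) * u2))
    (ht2i : (t2i * t2) % ((u1 : ℤ) * u2) = 1 % ((u1 : ℤ) * u2)) :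
    Kloosterman3 N n1 n2 m1 m2 (t1 * u1) (t2 * u2) =
      Kloosterman3 (Nat.gcd N t1) (u1i ^ 2 * u2 * n1) (u2i ^ 2 * u1 * n2) m1 m2 t1 t2 *
      Kloosterman3 (Nat.gcd N u1) (t1i ^ 2 * t2 * n1) (t2i ^ 2 * t1 * n2) m1 m2 u1 u2 := by
  classical
  have hD1 : t1 * u1 ≠ 0 := Nat.mul_ne_zero ht1.ne' hu1.ne'
  have hD2 : t2 * u2 ≠ 0 := Nat.mul_ne_zero ht2.ne' hu2.ne'
  have hD1pos : 0 < t1 * u1 := Nat.pos_of_ne_zero hD1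
  have hD2pos : 0 < t2 * u2 := Nat.pos_of_ne_zero hD2
  have hND1 : (N:ℤ) ∣ ((t1 * u1 : ℕ) : ℤ) := Int.natCast_dvd_natCast.mpr hN1
  have hTT : ((t1*t2 : ℕ):ℤ) ∣ (t1:ℤ)*t2 := by push_cast; exact dvd_rfl
  have hUU : ((u1*u2 : ℕ):ℤ) ∣ (u1:ℤ)*u2 := by push_cast; exact dvd_rfl
  have I1t1 : (u1i : ZMod t1) * (u1 : ZMod t1) = 1 := by
    have h := inv_fact t1 ((t1:ℤ)*t2) (dvd_mul_right _ _) hu1i; push_cast at h; exact h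
  have I2t1 : (u2i : ZMod t1) * (u2 : ZMod t1) = 1 := by
    have h := inv_fact t1 ((t1:ℤ)*t2) (dvd_mul_right _ _) hu2i; push_cast at h; exact h
  have I1t2 : (u1i : ZMod t2) * (u1 : ZMod t2) = 1 := by
    have h := inv_fact t2 ((t1:ℤ)*t2) (dvd_mul_left _ _) hu1i; push_cast at h; exact h
  have I2t2 : (u2i : ZMod t2) * (u2 : ZMod t2) = 1 := by
    have h := inv_fact t2 ((t1:ℤ)*t2) (dvd_mul_left _ _) hu2i; push_cast at h; exact h
  have I1T : (u1i : ZMod (t1*t2)) * (u1 : ZMod (t1*t2)) = 1 := by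
    have h := inv_fact (t1*t2) ((t1:ℤ)*t2) hTT hu1i; push_cast at h; exact h
  have I2T : (u2i : ZMod (t1*t2)) * (u2 : ZMod (t1*t2)) = 1 := by
    have h := inv_fact (t1*t2) ((t1:ℤ)*t2) hTT hu2i; push_cast at h; exact h
  have J1u1 : (t1i : ZMod u1) * (t1 : ZMod u1) = 1 := by
    have h := inv_fact u1 ((u1:ℤ)*u2) (dvd_mul_right _ _) ht1i; push_cast at h; exact h
  have J2u1 : (t2i : ZMod u1) * (t2 : ZMod u1) = 1 := by
    have h := inv_fact u1 ((u1:ℤ)*u2) (dvd_mul_right _ _) ht2i; push_cast at h; exact h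
  have J1u2 : (t1i : ZMod u2) * (t1 : ZMod u2) = 1 := by
    have h := inv_fact u2 ((u1:ℤ)*u2) (dvd_mul_left _ _) ht1i; push_cast at h; exact h
  have J2u2 : (t2i : ZMod u2) * (t2 : ZMod u2) = 1 := by
    have h := inv_fact u2 ((u1:ℤ)*u2) (dvd_mul_left _ _) ht2i; push_cast at h; exact h
  have J1U : (t1i : ZMod (u1*u2)) * (t1 : ZMod (u1*u2)) = 1 := by
    have h := inv_fact (u1*u2) ((u1:ℤ)*u2) hUU ht1i; push_cast at h; exact h
  have J2U : (t2i : ZMod (u1*u2)) * (t2 : ZMod (u1*u2)) = 1 := by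
    have h := inv_fact (u1*u2) ((u1:ℤ)*u2) hUU ht2i; push_cast at h; exact h
  have Zt1 : ((t1:ℕ) : ZMod t1) = 0 := ZMod.natCast_self t1
  have Zt2 : ((t2:ℕ) : ZMod t2) = 0 := ZMod.natCast_self t2
  have Zu1 : ((u1:ℕ) : ZMod u1) = 0 := ZMod.natCast_self u1
  have Zu2 : ((u2:ℕ) : ZMod u2) = 0 := ZMod.natCast_self u2
  have ZT : ((t1:ℕ) : ZMod (t1*t2)) * ((t2:ℕ) : ZMod (t1*t2)) = 0 := by
    have h := ZMod.natCast_self (t1*t2); push_cast at h; exact h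
  have ZU : ((u1:ℕ) : ZMod (u1*u2)) * ((u2:ℕ) : ZMod (u1*u2)) = 0 := by
    have h := ZMod.natCast_self (u1*u2); push_cast at h; exact h
  have injPB1 : ((((u1:ℤ) * u2i) * (u1i * (u2:ℤ) * ((u1:ℤ) * u2 * u1i * u2i)) : ℤ) : ZMod t1) = 1 := by
    push_cast
    linear_combination (((u1i : ZMod t1) * (u1 : ZMod t1)) + 1) * ((u2i : ZMod t1) * (u2 : ZMod t1))^2 * I1t1 + (((u2i : ZMod t1) * (u2 : ZMod t1)) + 1) * I2t1
  have injQB1 : (((t1i * (t2:ℤ) * ((t1:ℤ) * t2 * t1i * t2i)) : ℤ) : ZMod t1) = 0 := by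
    push_cast
    linear_combination ((t1i : ZMod t1) * (t2 : ZMod t1) * (t2 : ZMod t1) * (t1i : ZMod t1) * (t2i : ZMod t1)) * Zt1
  have injQiB1 : ((((t1:ℤ) * t2i) * (t1i * (t2:ℤ) * ((t1:ℤ) * t2 * t1i * t2i)) : ℤ) : ZMod u1) = 1 := by
    push_cast
    linear_combination (((t1i : ZMod u1) * (t1 : ZMod u1)) + 1) * ((t2i : ZMod u1) * (t2 : ZMod u1))^2 * J1u1 + (((t2i : ZMod u1) * (t2 : ZMod u1)) + 1) * J2u1
  have injPuB1 : (((u1i * (u2:ℤ) * ((u1:ℤ) * u2 * u1i * u2i)) : ℤ) : ZMod u1) = 0 := by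
    push_cast
    linear_combination ((u1i : ZMod u1) * (u2 : ZMod u1) * (u2 : ZMod u1) * (u1i : ZMod u1) * (u2i : ZMod u1)) * Zu1
  have injB1 := crt_inj t1 u1 (u1i * (u2:ℤ) * ((u1:ℤ) * u2 * u1i * u2i)) (t1i * (t2:ℤ) * ((t1:ℤ) * t2 * t1i * t2i)) ((u1:ℤ) * u2i) ((t1:ℤ) * t2i) injPB1 injQB1 injQiB1 injPuB1
  have injPB2 : ((((u2:ℤ) * u1i) * (u2i * (u1:ℤ) * ((u1:ℤ) * u2 * u1i * u2i)) : ℤ) : ZMod t2) = 1 := by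
    push_cast
    linear_combination (((u1i : ZMod t2) * (u1 : ZMod t2)) + 1) * ((u2i : ZMod t2) * (u2 : ZMod t2))^2 * I1t2 + (((u2i : ZMod t2) * (u2 : ZMod t2)) + 1) * I2t2
  have injQB2 : (((t2i * (t1:ℤ) * ((t1:ℤ) * t2 * t1i * t2i)) : ℤ) : ZMod t2) = 0 := by
    push_cast
    linear_combination ((t2i : ZMod t2) * (t1 : ZMod t2) * (t1 : ZMod t2) * (t1i : ZMod t2) * (t2i : ZMod t2)) * Zt2
  have injQiB2 : ((((t2:ℤ) * t1i) * (t2i * (t1:ℤ) * ((t1:ℤ) * t2 * t1i * t2i)) : ℤ) : ZMod u2) = 1 := by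
    push_cast
    linear_combination (((t1i : ZMod u2) * (t1 : ZMod u2)) + 1) * ((t2i : ZMod u2) * (t2 : ZMod u2))^2 * J1u2 + (((t2i : ZMod u2) * (t2 : ZMod u2)) + 1) * J2u2
  have injPuB2 : (((u2i * (u1:ℤ) * ((u1:ℤ) * u2 * u1i * u2i)) : ℤ) : ZMod u2) = 0 := by
    push_cast
    linear_combination ((u2i : ZMod u2) * (u1 : ZMod u2) * (u1 : ZMod u2) * (u1i : ZMod u2) * (u2i : ZMod u2)) * Zu2
  have injB2 := crt_inj t2 u2 (u2i * (u1:ℤ) * ((u1:ℤ) * u2 * u1i * u2i)) (t2i * (t1:ℤ) * ((t1:ℤ) * t2 * t1i * t2i)) ((u2:ℤ) * u1i) ((t2:ℤ) * t1i) injPB2 injQB2 injQiB2 injPuB2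
  have injPC1 : ((((u2:ℤ)) * (u2i * ((u1:ℤ) * u1i)) : ℤ) : ZMod t1) = 1 := by
    push_cast
    linear_combination ((u2i : ZMod t1) * (u2 : ZMod t1)) * I1t1 + I2t1
  have injQC1 : (((t2i * ((t1:ℤ) * t1i)) : ℤ) : ZMod t1) = 0 := by
    push_cast
    linear_combination ((t2i : ZMod t1) * (t1i : ZMod t1)) * Zt1
  have injQiC1 : ((((t2:ℤ)) * (t2i * ((t1:ℤ) * t1i)) : ℤ) : ZMod u1) = 1 := by
    push_cast
    linear_combination ((t2i : ZMod u1) * (t2 : ZMod u1)) * J1u1 + J2u1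
  have injPuC1 : (((u2i * ((u1:ℤ) * u1i)) : ℤ) : ZMod u1) = 0 := by
    push_cast
    linear_combination ((u2i : ZMod u1) * (u1i : ZMod u1)) * Zu1
  have injC1 := crt_inj t1 u1 (u2i * ((u1:ℤ) * u1i)) (t2i * ((t1:ℤ) * t1i)) ((u2:ℤ)) ((t2:ℤ)) injPC1 injQC1 injQiC1 injPuC1
  have injPY1 : (((u1i * (u2:ℤ)) * ((u1:ℤ) * u2i * ((u1:ℤ) * u1i)) : ℤ) : ZMod t1) = 1 := by
    push_cast
    linear_combination (((u1i : ZMod t1) * (u1 : ZMod t1)) + 1) * ((u2i : ZMod t1) * (u2 : ZMod t1)) * I1t1 + I2t1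
  have injQY1 : ((((t1:ℤ) * t2i * ((t1:ℤ) * t1i)) : ℤ) : ZMod t1) = 0 := by
    push_cast
    linear_combination ((t2i : ZMod t1) * (t1 : ZMod t1) * (t1i : ZMod t1)) * Zt1
  have injQiY1 : (((t1i * (t2:ℤ)) * ((t1:ℤ) * t2i * ((t1:ℤ) * t1i)) : ℤ) : ZMod u1) = 1 := by
    push_cast
    linear_combination (((t1i : ZMod u1) * (t1 : ZMod u1)) + 1) * ((t2i : ZMod u1) * (t2 : ZMod u1)) * J1u1 + J2u1
  have injPuY1 : ((((u1:ℤ) * u2i * ((u1:ℤ) * u1i)) : ℤ) : ZMod u1) = 0 := by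
    push_cast
    linear_combination ((u2i : ZMod u1) * (u1 : ZMod u1) * (u1i : ZMod u1)) * Zu1
  have injY1 := crt_inj t1 u1 ((u1:ℤ) * u2i * ((u1:ℤ) * u1i)) ((t1:ℤ) * t2i * ((t1:ℤ) * t1i)) (u1i * (u2:ℤ)) (t1i * (t2:ℤ)) injPY1 injQY1 injQiY1 injPuY1
  have injPZ1 : (((u2i) * ((u2:ℤ) * ((u1:ℤ) * u1i)) : ℤ) : ZMod t1) = 1 := by
    push_cast
    linear_combination ((u2i : ZMod t1) * (u2 : ZMod t1)) * I1t1 + I2t1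
  have injQZ1 : ((((t2:ℤ) * ((t1:ℤ) * t1i)) : ℤ) : ZMod t1) = 0 := by
    push_cast
    linear_combination ((t2 : ZMod t1) * (t1i : ZMod t1)) * Zt1
  have injQiZ1 : (((t2i) * ((t2:ℤ) * ((t1:ℤ) * t1i)) : ℤ) : ZMod u1) = 1 := by
    push_cast
    linear_combination ((t2i : ZMod u1) * (t2 : ZMod u1)) * J1u1 + J2u1
  have injPuZ1 : ((((u2:ℤ) * ((u1:ℤ) * u1i)) : ℤ) : ZMod u1) = 0 := by
    push_cast
    linear_combination ((u2 : ZMod u1) * (u1i : ZMod u1)) * Zu1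
  have injZ1 := crt_inj t1 u1 ((u2:ℤ) * ((u1:ℤ) * u1i)) ((t2:ℤ) * ((t1:ℤ) * t1i)) (u2i) (t2i) injPZ1 injQZ1 injQiZ1 injPuZ1
  have injPC2 : ((((u1:ℤ)) * (u1i * ((u2:ℤ) * u2i)) : ℤ) : ZMod t2) = 1 := by
    push_cast
    linear_combination ((u2i : ZMod t2) * (u2 : ZMod t2)) * I1t2 + I2t2
  have injQC2 : (((t1i * ((t2:ℤ) * t2i)) : ℤ) : ZMod t2) = 0 := by
    push_cast
    linear_combination ((t1i : ZMod t2) * (t2i : ZMod t2)) * Zt2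
  have injQiC2 : ((((t1:ℤ)) * (t1i * ((t2:ℤ) * t2i)) : ℤ) : ZMod u2) = 1 := by
    push_cast
    linear_combination ((t2i : ZMod u2) * (t2 : ZMod u2)) * J1u2 + J2u2
  have injPuC2 : (((u1i * ((u2:ℤ) * u2i)) : ℤ) : ZMod u2) = 0 := by
    push_cast
    linear_combination ((u1i : ZMod u2) * (u2i : ZMod u2)) * Zu2
  have injC2 := crt_inj t2 u2 (u1i * ((u2:ℤ) * u2i)) (t1i * ((t2:ℤ) * t2i)) ((u1:ℤ)) ((t1:ℤ)) injPC2 injQC2 injQiC2 injPuC2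
  have injPY2 : (((u2i * (u1:ℤ)) * ((u2:ℤ) * u1i * ((u2:ℤ) * u2i)) : ℤ) : ZMod t2) = 1 := by
    push_cast
    linear_combination ((u2i : ZMod t2) * (u2 : ZMod t2))^2 * I1t2 + (((u2i : ZMod t2) * (u2 : ZMod t2)) + 1) * I2t2
  have injQY2 : ((((t2:ℤ) * t1i * ((t2:ℤ) * t2i)) : ℤ) : ZMod t2) = 0 := by
    push_cast
    linear_combination ((t1i : ZMod t2) * (t2 : ZMod t2) * (t2i : ZMod t2)) * Zt2
  have injQiY2 : (((t2i * (t1:ℤ)) * ((t2:ℤ) * t1i * ((t2:ℤ) * t2i)) : ℤ) : ZMod u2) = 1 := by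
    push_cast
    linear_combination ((t2i : ZMod u2) * (t2 : ZMod u2))^2 * J1u2 + (((t2i : ZMod u2) * (t2 : ZMod u2)) + 1) * J2u2
  have injPuY2 : ((((u2:ℤ) * u1i * ((u2:ℤ) * u2i)) : ℤ) : ZMod u2) = 0 := by
    push_cast
    linear_combination ((u1i : ZMod u2) * (u2 : ZMod u2) * (u2i : ZMod u2)) * Zu2
  have injY2 := crt_inj t2 u2 ((u2:ℤ) * u1i * ((u2:ℤ) * u2i)) ((t2:ℤ) * t1i * ((t2:ℤ) * t2i)) (u2i * (u1:ℤ)) (t2i * (t1:ℤ)) injPY2 injQY2 injQiY2 injPuY2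
  have injPZ2 : (((u1i) * ((u1:ℤ) * ((u2:ℤ) * u2i)) : ℤ) : ZMod t2) = 1 := by
    push_cast
    linear_combination ((u2i : ZMod t2) * (u2 : ZMod t2)) * I1t2 + I2t2
  have injQZ2 : ((((t1:ℤ) * ((t2:ℤ) * t2i)) : ℤ) : ZMod t2) = 0 := by
    push_cast
    linear_combination ((t1 : ZMod t2) * (t2i : ZMod t2)) * Zt2
  have injQiZ2 : (((t1i) * ((t1:ℤ) * ((t2:ℤ) * t2i)) : ℤ) : ZMod u2) = 1 := by
    push_cast
    linear_combination ((t2i : ZMod u2) * (t2 : ZMod u2)) * J1u2 + J2u2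
  have injPuZ2 : ((((u1:ℤ) * ((u2:ℤ) * u2i)) : ℤ) : ZMod u2) = 0 := by
    push_cast
    linear_combination ((u1 : ZMod u2) * (u2i : ZMod u2)) * Zu2
  have injZ2 := crt_inj t2 u2 ((u1:ℤ) * ((u2:ℤ) * u2i)) ((t1:ℤ) * ((t2:ℤ) * t2i)) (u1i) (t1i) injPZ2 injQZ2 injQiZ2 injPuZ2
  have RB1t : ∀ a b : ℕ, (((u1i * (u2:ℤ) * ((u1:ℤ) * u2 * u1i * u2i)) * (a:ℤ) + (t1i * (t2:ℤ) * ((t1:ℤ) * t2 * t1i * t2i)) * (b:ℤ) : ℤ) : ZMod (t1*t2)) = ((u1i * (u2:ℤ) * (a:ℤ) : ℤ) : ZMod (t1*t2)) := by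
    intro a b
    push_cast
    linear_combination ((u1i : ZMod (t1*t2)) * (u2 : ZMod (t1*t2)) * (a : ZMod (t1*t2)) * (u2 : ZMod (t1*t2)) * (u2i : ZMod (t1*t2))) * I1T + ((u1i : ZMod (t1*t2)) * (u2 : ZMod (t1*t2)) * (a : ZMod (t1*t2))) * I2T + ((t1i : ZMod (t1*t2)) * (t1i : ZMod (t1*t2)) * (t2 : ZMod (t1*t2)) * (t2i : ZMod (t1*t2)) * (b : ZMod (t1*t2))) * ZT
  have RB1u : ∀ a b : ℕ, (((u1i * (u2:ℤ) * ((u1:ℤ) * u2 * u1i * u2i)) * (a:ℤ) + (t1i * (t2:ℤ) * ((t1:ℤ) * t2 * t1i * t2i)) * (b:ℤ) : ℤ) : ZMod (u1*u2)) = ((t1i * (t2:ℤ) * (b:ℤ) : ℤ) : ZMod (u1*u2)) := by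
    intro a b
    push_cast
    linear_combination ((t1i : ZMod (u1*u2)) * (t2 : ZMod (u1*u2)) * (b : ZMod (u1*u2)) * (t2 : ZMod (u1*u2)) * (t2i : ZMod (u1*u2))) * J1U + ((t1i : ZMod (u1*u2)) * (t2 : ZMod (u1*u2)) * (b : ZMod (u1*u2))) * J2U + ((u1i : ZMod (u1*u2)) * (u1i : ZMod (u1*u2)) * (u2 : ZMod (u1*u2)) * (u2i : ZMod (u1*u2)) * (a : ZMod (u1*u2))) * ZU
  have RB2t : ∀ a b : ℕ, (((u2i * (u1:ℤ) * ((u1:ℤ) * u2 * u1i * u2i)) * (a:ℤ) + (t2i * (t1:ℤ) * ((t1:ℤ) * t2 * t1i * t2i)) * (b:ℤ) : ℤ) : ZMod (t1*t2)) = ((u2i * (u1:ℤ) * (a:ℤ) : ℤ) : ZMod (t1*t2)) := by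
    intro a b
    push_cast
    linear_combination ((u2i : ZMod (t1*t2)) * (u1 : ZMod (t1*t2)) * (a : ZMod (t1*t2)) * (u2 : ZMod (t1*t2)) * (u2i : ZMod (t1*t2))) * I1T + ((u2i : ZMod (t1*t2)) * (u1 : ZMod (t1*t2)) * (a : ZMod (t1*t2))) * I2T + ((t2i : ZMod (t1*t2)) * (t2i : ZMod (t1*t2)) * (t1 : ZMod (t1*t2)) * (t1i : ZMod (t1*t2)) * (b : ZMod (t1*t2))) * ZT
  have RB2u : ∀ a b : ℕ, (((u2i * (u1:ℤ) * ((u1:ℤ) * u2 * u1i * u2i)) * (a:ℤ) + (t2i * (t1:ℤ) * ((t1:ℤ) * t2 * t1i * t2i)) * (b:ℤ) : ℤ) : ZMod (u1*u2)) = ((t2i * (t1:ℤ) * (b:ℤ) : ℤ) : ZMod (u1*u2)) := by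
    intro a b
    push_cast
    linear_combination ((t2i : ZMod (u1*u2)) * (t1 : ZMod (u1*u2)) * (b : ZMod (u1*u2)) * (t2 : ZMod (u1*u2)) * (t2i : ZMod (u1*u2))) * J1U + ((t2i : ZMod (u1*u2)) * (t1 : ZMod (u1*u2)) * (b : ZMod (u1*u2))) * J2U + ((u2i : ZMod (u1*u2)) * (u2i : ZMod (u1*u2)) * (u1 : ZMod (u1*u2)) * (u1i : ZMod (u1*u2)) * (a : ZMod (u1*u2))) * ZU
  have RC1t : ∀ a b : ℕ, (((u2i * ((u1:ℤ) * u1i)) * (a:ℤ) + (t2i * ((t1:ℤ) * t1i)) * (b:ℤ) : ℤ) : ZMod t1) = ((u2i * (a:ℤ) : ℤ) : ZMod t1) := by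
    intro a b
    push_cast
    linear_combination ((u2i : ZMod t1) * (a : ZMod t1)) * I1t1 + ((t2i : ZMod t1) * (t1i : ZMod t1) * (b : ZMod t1)) * Zt1
  have RC1u : ∀ a b : ℕ, (((u2i * ((u1:ℤ) * u1i)) * (a:ℤ) + (t2i * ((t1:ℤ) * t1i)) * (b:ℤ) : ℤ) : ZMod u1) = ((t2i * (b:ℤ) : ℤ) : ZMod u1) := by
    intro a b
    push_cast
    linear_combination ((t2i : ZMod u1) * (b : ZMod u1)) * J1u1 + ((u2i : ZMod u1) * (u1i : ZMod u1) * (a : ZMod u1)) * Zu1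
  have RY1t : ∀ a b : ℕ, ((((u1:ℤ) * u2i * ((u1:ℤ) * u1i)) * (a:ℤ) + ((t1:ℤ) * t2i * ((t1:ℤ) * t1i)) * (b:ℤ) : ℤ) : ZMod t1) = (((u1:ℤ) * u2i * (a:ℤ) : ℤ) : ZMod t1) := by
    intro a b
    push_cast
    linear_combination ((u1 : ZMod t1) * (u2i : ZMod t1) * (a : ZMod t1)) * I1t1 + ((t2i : ZMod t1) * (t1 : ZMod t1) * (t1i : ZMod t1) * (b : ZMod t1)) * Zt1
  have RY1u : ∀ a b : ℕ, ((((u1:ℤ) * u2i * ((u1:ℤ) * u1i)) * (a:ℤ) + ((t1:ℤ) * t2i * ((t1:ℤ) * t1i)) * (b:ℤ) : ℤ) : ZMod u1) = (((t1:ℤ) * t2i * (b:ℤ) : ℤ) : ZMod u1) := by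
    intro a b
    push_cast
    linear_combination ((t1 : ZMod u1) * (t2i : ZMod u1) * (b : ZMod u1)) * J1u1 + ((u2i : ZMod u1) * (u1 : ZMod u1) * (u1i : ZMod u1) * (a : ZMod u1)) * Zu1
  have RZ1t : ∀ a b : ℕ, ((((u2:ℤ) * ((u1:ℤ) * u1i)) * (a:ℤ) + ((t2:ℤ) * ((t1:ℤ) * t1i)) * (b:ℤ) : ℤ) : ZMod t1) = (((u2:ℤ) * (a:ℤ) : ℤ) : ZMod t1) := by
    intro a b
    push_cast
    linear_combination ((u2 : ZMod t1) * (a : ZMod t1)) * I1t1 + ((t2 : ZMod t1) * (t1i : ZMod t1) * (b : ZMod t1)) * Zt1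
  have RZ1u : ∀ a b : ℕ, ((((u2:ℤ) * ((u1:ℤ) * u1i)) * (a:ℤ) + ((t2:ℤ) * ((t1:ℤ) * t1i)) * (b:ℤ) : ℤ) : ZMod u1) = (((t2:ℤ) * (b:ℤ) : ℤ) : ZMod u1) := by
    intro a b
    push_cast
    linear_combination ((t2 : ZMod u1) * (b : ZMod u1)) * J1u1 + ((u2 : ZMod u1) * (u1i : ZMod u1) * (a : ZMod u1)) * Zu1
  have RC2t : ∀ a b : ℕ, (((u1i * ((u2:ℤ) * u2i)) * (a:ℤ) + (t1i * ((t2:ℤ) * t2i)) * (b:ℤ) : ℤ) : ZMod t2) = ((u1i * (a:ℤ) : ℤ) : ZMod t2) := by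
    intro a b
    push_cast
    linear_combination ((u1i : ZMod t2) * (a : ZMod t2)) * I2t2 + ((t1i : ZMod t2) * (t2i : ZMod t2) * (b : ZMod t2)) * Zt2
  have RC2u : ∀ a b : ℕ, (((u1i * ((u2:ℤ) * u2i)) * (a:ℤ) + (t1i * ((t2:ℤ) * t2i)) * (b:ℤ) : ℤ) : ZMod u2) = ((t1i * (b:ℤ) : ℤ) : ZMod u2) := by
    intro a b
    push_cast
    linear_combination ((t1i : ZMod u2) * (b : ZMod u2)) * J2u2 + ((u1i : ZMod u2) * (u2i : ZMod u2) * (a : ZMod u2)) * Zu2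
  have RY2t : ∀ a b : ℕ, ((((u2:ℤ) * u1i * ((u2:ℤ) * u2i)) * (a:ℤ) + ((t2:ℤ) * t1i * ((t2:ℤ) * t2i)) * (b:ℤ) : ℤ) : ZMod t2) = (((u2:ℤ) * u1i * (a:ℤ) : ℤ) : ZMod t2) := by
    intro a b
    push_cast
    linear_combination ((u2 : ZMod t2) * (u1i : ZMod t2) * (a : ZMod t2)) * I2t2 + ((t1i : ZMod t2) * (t2 : ZMod t2) * (t2i : ZMod t2) * (b : ZMod t2)) * Zt2
  have RY2u : ∀ a b : ℕ, ((((u2:ℤ) * u1i * ((u2:ℤ) * u2i)) * (a:ℤ) + ((t2:ℤ) * t1i * ((t2:ℤ) * t2i)) * (b:ℤ) : ℤ) : ZMod u2) = (((t2:ℤ) * t1i * (b:ℤ) : ℤ) : ZMod u2) := by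
    intro a b
    push_cast
    linear_combination ((t2 : ZMod u2) * (t1i : ZMod u2) * (b : ZMod u2)) * J2u2 + ((u1i : ZMod u2) * (u2 : ZMod u2) * (u2i : ZMod u2) * (a : ZMod u2)) * Zu2
  have RZ2t : ∀ a b : ℕ, ((((u1:ℤ) * ((u2:ℤ) * u2i)) * (a:ℤ) + ((t1:ℤ) * ((t2:ℤ) * t2i)) * (b:ℤ) : ℤ) : ZMod t2) = (((u1:ℤ) * (a:ℤ) : ℤ) : ZMod t2) := by
    intro a b
    push_cast
    linear_combination ((u1 : ZMod t2) * (a : ZMod t2)) * I2t2 + ((t1 : ZMod t2) * (t2i : ZMod t2) * (b : ZMod t2)) * Zt2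
  have RZ2u : ∀ a b : ℕ, ((((u1:ℤ) * ((u2:ℤ) * u2i)) * (a:ℤ) + ((t1:ℤ) * ((t2:ℤ) * t2i)) * (b:ℤ) : ℤ) : ZMod u2) = (((t1:ℤ) * (b:ℤ) : ℤ) : ZMod u2) := by
    intro a b
    push_cast
    linear_combination ((t1 : ZMod u2) * (b : ZMod u2)) * J2u2 + ((u1 : ZMod u2) * (u2i : ZMod u2) * (a : ZMod u2)) * Zu2
  have hcard1 : (range t1 ×ˢ range u1).card = t1 * u1 := by simp
  have hcard2 : (range t2 ×ˢ range u2).card = t2 * u2 := by simp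
  have hres := resum (t1*u1) (t2*u2) (gK N n1 n2 m1 m2 (t1*u1) (t2*u2)) hD1 hD2
    (fun B1 C1 Y1 Z1 B2 C2 Y2 Z2 => gK_C1 N n1 n2 m1 m2 (t1*u1) (t2*u2) B1 C1 Y1 Z1 B2 C2 Y2 Z2)
    (fun B1 C1 Y1 Z1 B2 C2 Y2 Z2 => gK_Y1 N n1 n2 m1 m2 (t1*u1) (t2*u2) B1 C1 Y1 Z1 B2 C2 Y2 Z2 hD1pos)
    (fun B1 C1 Y1 Z1 B2 C2 Y2 Z2 => gK_Z1 N n1 n2 m1 m2 (t1*u1) (t2*u2) B1 C1 Y1 Z1 B2 C2 Y2 Z2 hD1pos)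
    (fun B1 C1 Y1 Z1 B2 C2 Y2 Z2 => gK_C2 N n1 n2 m1 m2 (t1*u1) (t2*u2) B1 C1 Y1 Z1 B2 C2 Y2 Z2)
    (fun B1 C1 Y1 Z1 B2 C2 Y2 Z2 => gK_Y2 N n1 n2 m1 m2 (t1*u1) (t2*u2) B1 C1 Y1 Z1 B2 C2 Y2 Z2 hD2pos)
    (fun B1 C1 Y1 Z1 B2 C2 Y2 Z2 => gK_Z2 N n1 n2 m1 m2 (t1*u1) (t2*u2) B1 C1 Y1 Z1 B2 C2 Y2 Z2 hD2pos)
    (fun B1 C1 Y1 Z1 B2 C2 Y2 Z2 => by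
      have h := gK_B1 N n1 n2 m1 m2 (t1*u1) (t2*u2) B1 C1 Y1 Z1 B2 (C2 + B2) (Y2 - Z2) Z2 hD1pos hND1
      rw [show C2 + B2 - B2 = C2 from by ring, show Y2 - Z2 + Z2 = Y2 from by ring] at h
      exact h)
    (fun B1 C1 Y1 Z1 B2 C2 Y2 Z2 => by
      have h := gK_B2 N n1 n2 m1 m2 (t1*u1) (t2*u2) B1 (C1 + B1) (Y1 - Z1) Z1 B2 C2 Y2 Z2 hD2pos
      rw [show C1 + B1 - B1 = C1 from by ring, show Y1 - Z1 + Z1 = Y1 from by ring] at h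
      exact h)
    (range t1 ×ˢ range u1) (fun p : ℕ × ℕ => (u1i * (u2:ℤ) * ((u1:ℤ) * u2 * u1i * u2i)) * (p.1:ℤ) + (t1i * (t2:ℤ) * ((t1:ℤ) * t2 * t1i * t2i)) * (p.2:ℤ)) hcard1 injB1
    (range t2 ×ˢ range u2) (fun p : ℕ × ℕ => (u2i * (u1:ℤ) * ((u1:ℤ) * u2 * u1i * u2i)) * (p.1:ℤ) + (t2i * (t1:ℤ) * ((t1:ℤ) * t2 * t1i * t2i)) * (p.2:ℤ)) hcard2 injB2
    (range t1 ×ˢ range u1) (fun p : ℕ × ℕ => (u2i * ((u1:ℤ) * u1i)) * (p.1:ℤ) + (t2i * ((t1:ℤ) * t1i)) * (p.2:ℤ)) hcard1 injC1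
    (range t1 ×ˢ range u1) (fun p : ℕ × ℕ => ((u1:ℤ) * u2i * ((u1:ℤ) * u1i)) * (p.1:ℤ) + ((t1:ℤ) * t2i * ((t1:ℤ) * t1i)) * (p.2:ℤ)) hcard1 injY1
    (range t1 ×ˢ range u1) (fun p : ℕ × ℕ => ((u2:ℤ) * ((u1:ℤ) * u1i)) * (p.1:ℤ) + ((t2:ℤ) * ((t1:ℤ) * t1i)) * (p.2:ℤ)) hcard1 injZ1
    (range t2 ×ˢ range u2) (fun p : ℕ × ℕ => (u1i * ((u2:ℤ) * u2i)) * (p.1:ℤ) + (t1i * ((t2:ℤ) * t2i)) * (p.2:ℤ)) hcard2 injC2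
    (range t2 ×ˢ range u2) (fun p : ℕ × ℕ => ((u2:ℤ) * u1i * ((u2:ℤ) * u2i)) * (p.1:ℤ) + ((t2:ℤ) * t1i * ((t2:ℤ) * t2i)) * (p.2:ℤ)) hcard2 injY2
    (range t2 ×ˢ range u2) (fun p : ℕ × ℕ => ((u1:ℤ) * ((u2:ℤ) * u2i)) * (p.1:ℤ) + ((t1:ℤ) * ((t2:ℤ) * t2i)) * (p.2:ℤ)) hcard2 injZ2
  have hheart : ∀ (p1 p2 p3 p4 p5 p6 p7 p8 : ℕ × ℕ),
      gK N n1 n2 m1 m2 (t1*u1) (t2*u2) ((fun p : ℕ × ℕ => (u1i * (u2:ℤ) * ((u1:ℤ) * u2 * u1i * u2i)) * (p.1:ℤ) + (t1i * (t2:ℤ) * ((t1:ℤ) * t2 * t1i * t2i)) * (p.2:ℤ)) p1) ((fun p : ℕ × ℕ => (u2i * ((u1:ℤ) * u1i)) * (p.1:ℤ) + (t2i * ((t1:ℤ) * t1i)) * (p.2:ℤ)) p3) ((fun p : ℕ × ℕ => ((u1:ℤ) * u2i * ((u1:ℤ) * u1i)) * (p.1:ℤ) + ((t1:ℤ) * t2i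 * ((t1:ℤ) * t1i)) * (p.2:ℤ)) p4) ((fun p : ℕ × ℕ => ((u2:ℤ) * ((u1:ℤ) * u1i)) * (p.1:ℤ) + ((t2:ℤ) * ((t1:ℤ) * t1i)) * (p.2:ℤ)) p5)
        ((fun p : ℕ × ℕ => (u2i * (u1:ℤ) * ((u1:ℤ) * u2 * u1i * u2i)) * (p.1:ℤ) + (t2i * (t1:ℤ) * ((t1:ℤ) * t2 * t1i * t2i)) * (p.2:ℤ)) p2) ((fun p : ℕ × ℕ => (u1i * ((u2:ℤ) * u2i)) * (p.1:ℤ) + (t1i * ((t2:ℤ) * t2i)) * (p.2:ℤ)) p6) ((fun p : ℕ × ℕ => ((u2:ℤ) * u1i * ((u2:ℤ) * u2i)) * (p.1:ℤ) + ((t2:ℤ) * t1i * ((t2:ℤ) * t2i)) * (p.2:ℤ)) p7) ((fun p : ℕ × ℕ => ((u1:ℤ) * ((u2:ℤ) * u2i)) * (p.1:ℤ) + ((t1:ℤ) * ((t2:ℤ) * t2i)) * (p.2:ℤ)) p8)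
      = gK (N.gcd t1) (u1i^2 * u2 * n1) (u2i^2 * u1 * n2) m1 m2 t1 t2 (p1.1:ℤ) (p3.1:ℤ) (p4.1:ℤ) (p5.1:ℤ) (p2.1:ℤ) (p6.1:ℤ) (p7.1:ℤ) (p8.1:ℤ) *
        gK (N.gcd u1) (t1i^2 * t2 * n1) (t2i^2 * t1 * n2) m1 m2 u1 u2 (p1.2:ℤ) (p3.2:ℤ) (p4.2:ℤ) (p5.2:ℤ) (p2.2:ℤ) (p6.2:ℤ) (p7.2:ℤ) (p8.2:ℤ) := by
    intro p1 p2 p3 p4 p5 p6 p7 p8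
    exact heart N t1 u1 t2 u2 ht1 ht2 hu1 hu2 hcop hN1 n1 n2 m1 m2 u1i u2i t1i t2i
      hu1i hu2i ht1i ht2i _ _ _ _ _ _ _ _
      (p1.1:ℤ) (p3.1:ℤ) (p4.1:ℤ) (p5.1:ℤ) (p2.1:ℤ) (p6.1:ℤ) (p7.1:ℤ) (p8.1:ℤ)
      (p1.2:ℤ) (p3.2:ℤ) (p4.2:ℤ) (p5.2:ℤ) (p2.2:ℤ) (p6.2:ℤ) (p7.2:ℤ) (p8.2:ℤ)
      (RB1t p1.1 p1.2) (RB1u p1.1 p1.2) (RB2t p2.1 p2.2) (RB2u p2.1 p2.2)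
      (RC1t p3.1 p3.2) (RC1u p3.1 p3.2) (RY1t p4.1 p4.2) (RY1u p4.1 p4.2)
      (RZ1t p5.1 p5.2) (RZ1u p5.1 p5.2) (RC2t p6.1 p6.2) (RC2u p6.1 p6.2)
      (RY2t p7.1 p7.2) (RY2u p7.1 p7.2) (RZ2t p8.1 p8.2) (RZ2u p8.1 p8.2)
  have hbig : (∑ B1 ∈ range (t1*u1), ∑ C1 ∈ range (t1*u1), ∑ Y1 ∈ range (t1*u1), ∑ Z1 ∈ range (t1*u1),
      ∑ B2 ∈ range (t2*u2), ∑ C2 ∈ range (t2*u2), ∑ Y2 ∈ range (t2*u2), ∑ Z2 ∈ range (t2*u2),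
        gK N n1 n2 m1 m2 (t1*u1) (t2*u2) B1 C1 Y1 Z1 B2 C2 Y2 Z2)
      = (∑ B1 ∈ range t1, ∑ C1 ∈ range t1, ∑ Y1 ∈ range t1, ∑ Z1 ∈ range t1,
          ∑ B2 ∈ range t2, ∑ C2 ∈ range t2, ∑ Y2 ∈ range t2, ∑ Z2 ∈ range t2,
            gK (N.gcd t1) (u1i^2 * u2 * n1) (u2i^2 * u1 * n2) m1 m2 t1 t2 B1 C1 Y1 Z1 B2 C2 Y2 Z2)
        * (∑ B1 ∈ range u1, ∑ C1 ∈ range u1, ∑ Y1 ∈ range u1, ∑ Z1 ∈ range u1,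
          ∑ B2 ∈ range u2, ∑ C2 ∈ range u2, ∑ Y2 ∈ range u2, ∑ Z2 ∈ range u2,
            gK (N.gcd u1) (t1i^2 * t2 * n1) (t2i^2 * t1 * n2) m1 m2 u1 u2 B1 C1 Y1 Z1 B2 C2 Y2 Z2) := by
    rw [hres]
    rw [show (∑ a1 ∈ range t1 ×ˢ range u1, ∑ a2 ∈ range t2 ×ˢ range u2,
        ∑ a3 ∈ range t1 ×ˢ range u1, ∑ a4 ∈ range t1 ×ˢ range u1, ∑ a5 ∈ range t1 ×ˢ range u1,
        ∑ a6 ∈ range t2 ×ˢ range u2, ∑ a7 ∈ range t2 ×ˢ range u2, ∑ a8 ∈ range t2 ×ˢ range u2,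
          gK N n1 n2 m1 m2 (t1*u1) (t2*u2) ((fun p : ℕ × ℕ => (u1i * (u2:ℤ) * ((u1:ℤ) * u2 * u1i * u2i)) * (p.1:ℤ) + (t1i * (t2:ℤ) * ((t1:ℤ) * t2 * t1i * t2i)) * (p.2:ℤ)) a1) ((fun p : ℕ × ℕ => (u2i * ((u1:ℤ) * u1i)) * (p.1:ℤ) + (t2i * ((t1:ℤ) * t1i)) * (p.2:ℤ)) a3) ((fun p : ℕ × ℕ => ((u1:ℤ) * u2i * ((u1:ℤ) * u1i)) * (p.1:ℤ) + ((t1:ℤ) * t2i * ((t1:ℤ) * t1i)) * (p.2:ℤ)) a4) ((fun p : ℕ × ℕ => ((u2:ℤ) * ((u1:ℤ) * u1i)) * (p.1:ℤ) + ((t2:ℤ) * ((t1:ℤ) * t1i)) * (p.2:ℤ)) a5)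
            ((fun p : ℕ × ℕ => (u2i * (u1:ℤ) * ((u1:ℤ) * u2 * u1i * u2i)) * (p.1:ℤ) + (t2i * (t1:ℤ) * ((t1:ℤ) * t2 * t1i * t2i)) * (p.2:ℤ)) a2) ((fun p : ℕ × ℕ => (u1i * ((u2:ℤ) * u2i)) * (p.1:ℤ) + (t1i * ((t2:ℤ) * t2i)) * (p.2:ℤ)) a6) ((fun p : ℕ × ℕ => ((u2:ℤ) * u1i * ((u2:ℤ) * u2i)) * (p.1:ℤ) + ((t2:ℤ) * t1i * ((t2:ℤ) * t2i)) * (p.2:ℤ)) a7) ((fun p : ℕ × ℕ => ((u1:ℤ) * ((u2:ℤ) * u2i)) * (p.1:ℤ) + ((t1:ℤ) * ((t2:ℤ) * t2i)) * (p.2:ℤ)) a8))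
      = ∑ p1 ∈ range t1 ×ˢ range u1, ∑ p2 ∈ range t2 ×ˢ range u2,
        ∑ p3 ∈ range t1 ×ˢ range u1, ∑ p4 ∈ range t1 ×ˢ range u1, ∑ p5 ∈ range t1 ×ˢ range u1,
        ∑ p6 ∈ range t2 ×ˢ range u2, ∑ p7 ∈ range t2 ×ˢ range u2, ∑ p8 ∈ range t2 ×ˢ range u2,
          (fun B1 C1 Y1 Z1 B2 C2 Y2 Z2 => gK (N.gcd t1) (u1i^2 * u2 * n1) (u2i^2 * u1 * n2) m1 m2 t1 t2 (B1:ℤ) (C1:ℤ) (Y1:ℤ) (Z1:ℤ) (B2:ℤ) (C2:ℤ) (Y2:ℤ) (Z2:ℤ))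
            p1.1 p3.1 p4.1 p5.1 p2.1 p6.1 p7.1 p8.1 *
          (fun B1 C1 Y1 Z1 B2 C2 Y2 Z2 => gK (N.gcd u1) (t1i^2 * t2 * n1) (t2i^2 * t1 * n2) m1 m2 u1 u2 (B1:ℤ) (C1:ℤ) (Y1:ℤ) (Z1:ℤ) (B2:ℤ) (C2:ℤ) (Y2:ℤ) (Z2:ℤ))
            p1.2 p3.2 p4.2 p5.2 p2.2 p6.2 p7.2 p8.2 from
      Finset.sum_congr rfl fun p1 _ => Finset.sum_congr rfl fun p2 _ =>
      Finset.sum_congr rfl fun p3 _ => Finset.sum_congr rfl fun p4 _ =>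
      Finset.sum_congr rfl fun p5 _ => Finset.sum_congr rfl fun p6 _ =>
      Finset.sum_congr rfl fun p7 _ => Finset.sum_congr rfl fun p8 _ =>
        hheart p1 p2 p3 p4 p5 p6 p7 p8]
    rw [factor8 (range t1) (range t2) (range u1) (range u2)
      (fun B1 C1 Y1 Z1 B2 C2 Y2 Z2 => gK (N.gcd t1) (u1i^2 * u2 * n1) (u2i^2 * u1 * n2) m1 m2 t1 t2 (B1:ℤ) (C1:ℤ) (Y1:ℤ) (Z1:ℤ) (B2:ℤ) (C2:ℤ) (Y2:ℤ) (Z2:ℤ))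
      (fun B1 C1 Y1 Z1 B2 C2 Y2 Z2 => gK (N.gcd u1) (t1i^2 * t2 * n1) (t2i^2 * t1 * n2) m1 m2 u1 u2 (B1:ℤ) (C1:ℤ) (Y1:ℤ) (Z1:ℤ) (B2:ℤ) (C2:ℤ) (Y2:ℤ) (Z2:ℤ))]
    rw [← swap8 t1 t2 (fun B1 C1 Y1 Z1 B2 C2 Y2 Z2 => gK (N.gcd t1) (u1i^2 * u2 * n1) (u2i^2 * u1 * n2) m1 m2 t1 t2 (B1:ℤ) (C1:ℤ) (Y1:ℤ) (Z1:ℤ) (B2:ℤ) (C2:ℤ) (Y2:ℤ) (Z2:ℤ))]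
    rw [← swap8 u1 u2 (fun B1 C1 Y1 Z1 B2 C2 Y2 Z2 => gK (N.gcd u1) (t1i^2 * t2 * n1) (t2i^2 * t1 * n2) m1 m2 u1 u2 (B1:ℤ) (C1:ℤ) (Y1:ℤ) (Z1:ℤ) (B2:ℤ) (C2:ℤ) (Y2:ℤ) (Z2:ℤ))]
  rw [K3_eq N n1 n2 m1 m2 (t1*u1) (t2*u2),
      K3_eq (N.gcd t1) (u1i^2 * u2 * n1) (u2i^2 * u1 * n2) m1 m2 t1 t2,
      K3_eq (N.gcd u1) (t1i^2 * t2 * n1) (t2i^2 * t1 * n2) m1 m2 u1 u2,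
      hbig]
  have c1 : ((t1:ℂ)) ≠ 0 := Nat.cast_ne_zero.mpr ht1.ne'
  have c2 : ((t2:ℂ)) ≠ 0 := Nat.cast_ne_zero.mpr ht2.ne'
  have c3 : ((u1:ℂ)) ≠ 0 := Nat.cast_ne_zero.mpr hu1.ne'
  have c4 : ((u2:ℂ)) ≠ 0 := Nat.cast_ne_zero.mpr hu2.ne'
  push_cast
  ring
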